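/- arXiv:1310.0247 — 7 statements merged into one kernel-verified Lean document; each statement's English description precedes it below -/
import Mathlib

section
/- Let 0 < α ≤ 1. The following are equivalent: (i) ∑_{n=0}^∞ |P_n(0)|^{2α} < ∞ and ∑_{n=0}^∞ |Q_n(0)|^{2α} < ∞; (ii) for every z ∈ ℂ, ∑_{n=0}^∞ |P_n(z)|^{2α} < ∞ and ∑_{n=0}^∞ |Q_n(z)|^{2α} < ∞. Moreover, if these conditions hold, then the moment problem is indeterminate, ∑_{n=0}^∞ b_n^{-α} < ∞, and for every z ∈ ℂ one has (∑_{n=0}^∞ |P_n(z)|²)^{1/2} ≤ C·exp(K|z|^α), where C = (∑_{n=0}^∞ (P_n(0)² + Q_n(0)²))^{1/2} and K = (1/α)·∑_{n=0}^∞ (|P_n(0)|^{2α} + |Q_n(0)|^{2α}). -/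
open scoped NNReal

lemma real_rpow_add_le {x y p : ℝ} (hx : 0 ≤ x) (hy : 0 ≤ y) (hp : 0 ≤ p) (hp1 : p ≤ 1) :
    (x + y) ^ p ≤ x ^ p + y ^ p := by
  have h := NNReal.rpow_add_le_add_rpow x.toNNReal y.toNNReal hp hp1
  have hc := NNReal.coe_le_coe.2 h
  rw [NNReal.coe_add, NNReal.coe_rpow, NNReal.coe_rpow, NNReal.coe_rpow,
    ← Real.toNNReal_add hx hy, Real.coe_toNNReal _ (by linarith : (0:ℝ) ≤ x + y),
    Real.coe_toNNReal _ hx, Real.coe_toNNReal _ hy] at hc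
  exact hc

lemma one_add_le_exp_rpow {u A : ℝ} (h0 : 0 < A) (h1 : A ≤ 1) (hu : 0 ≤ u) :
    1 + u ≤ Real.exp (u ^ A / A) := by
  have hp1 : (1:ℝ) ≤ 1 / A := by
    rw [le_div_iff₀ h0]; linarith
  have step1 : 1 + u ≤ (1 + u ^ A) ^ (1/A) := by
    have h := NNReal.add_rpow_le_rpow_add 1 (Real.toNNReal u ^ A) hp1
    have hc := NNReal.coe_le_coe.2 h
    have e1 : (Real.toNNReal u ^ A) ^ (1/A) = Real.toNNReal u := by
      rw [← NNReal.rpow_mul, mul_one_div, div_self h0.ne', NNReal.rpow_one]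
    rw [NNReal.one_rpow, e1] at hc
    have e2 : ((1 + Real.toNNReal u ^ A : ℝ≥0) : ℝ) = 1 + u ^ A := by
      rw [NNReal.coe_add, NNReal.coe_one, NNReal.coe_rpow, Real.coe_toNNReal _ hu]
    calc 1 + u = ((1 + Real.toNNReal u : ℝ≥0) : ℝ) := by
          rw [NNReal.coe_add, NNReal.coe_one, Real.coe_toNNReal _ hu]
      _ ≤ (((1 + Real.toNNReal u ^ A) ^ (1/A) : ℝ≥0) : ℝ) := by exact_mod_cast hc
      _ = (1 + u ^ A) ^ (1/A) := by rw [NNReal.coe_rpow, e2]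
  refine step1.trans ?_
  have h2 : (1 + u ^ A) ≤ Real.exp (u ^ A) := by
    have := Real.add_one_le_exp (u ^ A); linarith
  have h3 : (1 + u ^ A) ^ (1/A) ≤ (Real.exp (u ^ A)) ^ (1/A) :=
    Real.rpow_le_rpow (by positivity) h2 (by positivity)
  refine h3.trans_eq ?_
  rw [← Real.exp_mul, mul_one_div]

open Finset in
lemma gen_step (β γ z : ℂ) (hβ : β ≠ 0) (α' : ℂ) (d : ℕ → ℕ → ℂ) (v w : ℕ → ℂ) (n : ℕ)
    (hrec : z * v (n+1) = β * v (n+2) + α' * v (n+1) + γ * v n)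
    (hrec0 : β * w (n+2) + α' * w (n+1) + γ * w n = 0)
    (hd : ∀ k, β * d (n+2) k + α' * d (n+1) k + γ * d n k = 0)
    (hdnn : d n n = 0)
    (hw : β * d (n+2) (n+1) = 1)
    (ih1 : v n = w n + z * ∑ k ∈ Finset.range n, d n k * v k)
    (ih2 : v (n+1) = w (n+1) + z * ∑ k ∈ Finset.range (n+1), d (n+1) k * v k) :
    v (n+2) = w (n+2) + z * ∑ k ∈ Finset.range (n+2), d (n+2) k * v k := by
  apply mul_left_cancel₀ hβ
  have hs2 : ∑ k ∈ Finset.range (n+2), d (n+2) k * v k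
      = ∑ k ∈ Finset.range (n+1), d (n+2) k * v k + d (n+2) (n+1) * v (n+1) :=
    Finset.sum_range_succ _ _
  have hs1 : ∑ k ∈ Finset.range (n+1), d n k * v k
      = ∑ k ∈ Finset.range n, d n k * v k + d n n * v n := Finset.sum_range_succ _ _
  have key : β * ∑ k ∈ Finset.range (n+1), d (n+2) k * v k
      = -(α' * ∑ k ∈ Finset.range (n+1), d (n+1) k * v k)
        - γ * ∑ k ∈ Finset.range (n+1), d n k * v k := by
    rw [Finset.mul_sum, Finset.mul_sum, Finset.mul_sum, ← Finset.sum_neg_distrib,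
      ← Finset.sum_sub_distrib]
    refine Finset.sum_congr rfl fun k _ => ?_
    linear_combination v k * hd k
  set A := ∑ k ∈ Finset.range n, d n k * v k with hA
  set B := ∑ k ∈ Finset.range (n+1), d (n+1) k * v k with hB
  set A' := ∑ k ∈ Finset.range (n+1), d n k * v k with hA'
  set C := ∑ k ∈ Finset.range (n+1), d (n+2) k * v k with hC
  rw [hs2]
  have hA'A : A' = A := by rw [hs1, hdnn]; ring
  rw [hA'A] at key
  linear_combination -hrec - hrec0 - z * key - (z * v (n+1)) * hw - α' * ih2 - γ * ih1
/-- Berg–Szwarc, Theorem 1.2: for `0 < α ≤ 1` the conditions (i) and (ii) are equivalent,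
and when they hold the moment problem is indeterminate, the sequence of reciprocals of the
recurrence coefficients is in `ℓ^α`, and `P(z) ≤ C·exp(K·|z|^α)` with the explicit
constants `C` and `K`. -/
theorem stmt_0 (a b : ℕ → ℝ) (hb : ∀ n, 0 < b n)
    (P Q : ℕ → ℂ → ℂ)
    (hP0 : ∀ z : ℂ, P 0 z = 1) (hQ0 : ∀ z : ℂ, Q 0 z = 0)
    (hPrec0 : ∀ z : ℂ, z * P 0 z = (b 0 : ℂ) * P 1 z + (a 0 : ℂ) * P 0 z)
    (hQrec0 : ∀ z : ℂ, z * Q 0 z = (b 0 : ℂ) * Q 1 z + (a 0 : ℂ) * Q 0 z - 1)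
    (hPrec : ∀ (n : ℕ) (z : ℂ), z * P (n+1) z =
      (b (n+1) : ℂ) * P (n+2) z + (a (n+1) : ℂ) * P (n+1) z + (b n : ℂ) * P n z)
    (hQrec : ∀ (n : ℕ) (z : ℂ), z * Q (n+1) z =
      (b (n+1) : ℂ) * Q (n+2) z + (a (n+1) : ℂ) * Q (n+1) z + (b n : ℂ) * Q n z)
    (α : ℝ) (hα0 : 0 < α) (hα1 : α ≤ 1) :
    ((Summable (fun n => ‖P n 0‖ ^ (2 * α)) ∧
      Summable (fun n => ‖Q n 0‖ ^ (2 * α))) ↔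
      (∀ z : ℂ, Summable (fun n => ‖P n z‖ ^ (2 * α)) ∧
        Summable (fun n => ‖Q n z‖ ^ (2 * α)))) ∧
    ((Summable (fun n => ‖P n 0‖ ^ (2 * α)) ∧
      Summable (fun n => ‖Q n 0‖ ^ (2 * α))) →
      Summable (fun n => ‖P n 0‖ ^ 2 + ‖Q n 0‖ ^ 2) ∧
      Summable (fun n => (1 / b n) ^ α) ∧
      ∀ z : ℂ, Real.sqrt (∑' n, ‖P n z‖ ^ 2) ≤
        Real.sqrt (∑' n, (‖P n 0‖ ^ 2 + ‖Q n 0‖ ^ 2)) *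
          Real.exp ((1 / α) *
            (∑' n, (‖P n 0‖ ^ (2 * α) + ‖Q n 0‖ ^ (2 * α))) *
            ‖z‖ ^ α)) := by
  have hbne : ∀ n, (b n : ℂ) ≠ 0 := fun n => by
    exact_mod_cast Complex.ofReal_ne_zero.2 (hb n).ne'
  -- recurrences at 0
  have hP00 : ∀ n, (b (n+1):ℂ) * P (n+2) 0 + (a (n+1):ℂ) * P (n+1) 0 + (b n:ℂ) * P n 0 = 0 :=
    fun n => by linear_combination - hPrec n 0
  have hQ00 : ∀ n, (b (n+1):ℂ) * Q (n+2) 0 + (a (n+1):ℂ) * Q (n+1) 0 + (b n:ℂ) * Q n 0 = 0 :=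
    fun n => by linear_combination - hQrec n 0
  -- Wronskian at 0
  have hW : ∀ n, (b n : ℂ) * (Q (n+1) 0 * P n 0 - P (n+1) 0 * Q n 0) = 1 := by
    intro n
    induction n with
    | zero =>
      have h := hQrec0 0
      rw [hQ0] at h
      rw [hP0, hQ0]
      linear_combination - h
    | succ n ih =>
      have hp := hP00 n
      have hq := hQ00 n
      linear_combination P (n+1) 0 * hq - Q (n+1) 0 * hp + ih
  -- the determinant kernel
  set D : ℕ → ℕ → ℂ := fun n k => Q n 0 * P k 0 - P n 0 * Q k 0 with hDdef
  have hdrec : ∀ n k, (b (n+1):ℂ) * D (n+2) k + (a (n+1):ℂ) * D (n+1) k + (b n:ℂ) * D n k = 0 := by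
    intro n k
    simp only [hDdef]
    linear_combination P k 0 * hQ00 n - Q k 0 * hP00 n
  have hdnn : ∀ n, D n n = 0 := fun n => by simp only [hDdef]; ring
  have hwd : ∀ n, (b n : ℂ) * D (n+1) n = 1 := fun n => hW n
  -- variation of constants identity
  have hid : ∀ z : ℂ, ∀ n,
      (P n z = P n 0 + z * ∑ k ∈ Finset.range n, D n k * P k z) ∧
      (Q n z = Q n 0 + z * ∑ k ∈ Finset.range n, D n k * Q k z) := by
    intro z
    have key : ∀ n,
        ((P n z = P n 0 + z * ∑ k ∈ Finset.range n, D n k * P k z) ∧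
         (Q n z = Q n 0 + z * ∑ k ∈ Finset.range n, D n k * Q k z)) ∧
        ((P (n+1) z = P (n+1) 0 + z * ∑ k ∈ Finset.range (n+1), D (n+1) k * P k z) ∧
         (Q (n+1) z = Q (n+1) 0 + z * ∑ k ∈ Finset.range (n+1), D (n+1) k * Q k z)) := by
      intro n
      induction n with
      | zero =>
        refine ⟨⟨by simp [hP0], by simp [hQ0]⟩, ?_, ?_⟩
        · apply mul_left_cancel₀ (hbne 0)
          rw [Finset.sum_range_one]
          have h1 := hPrec0 z
          have h2 := hPrec0 0
          have h3 := hQrec0 0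
          rw [hP0] at h1 h2
          rw [hQ0] at h3
          simp only [hDdef, hP0, hQ0, zero_add]
          linear_combination h2 - h1 + z * h3
        · apply mul_left_cancel₀ (hbne 0)
          rw [Finset.sum_range_one]
          have h1 := hQrec0 z
          have h2 := hQrec0 0
          rw [hQ0] at h1 h2
          simp only [hDdef, hP0, hQ0, zero_add]
          linear_combination h2 - h1
      | succ n ih =>
        obtain ⟨⟨hPn, hQn⟩, hPn1, hQn1⟩ := ih
        refine ⟨⟨hPn1, hQn1⟩, ?_, ?_⟩
        · exact gen_step (b (n+1)) (b n) z (hbne (n+1)) (a (n+1)) D (fun k => P k z)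
            (fun k => P k 0) n (hPrec n z) (hP00 n) (fun k => hdrec n k) (hdnn n)
            (hwd (n+1)) hPn hPn1
        · exact gen_step (b (n+1)) (b n) z (hbne (n+1)) (a (n+1)) D (fun k => Q k z)
            (fun k => Q k 0) n (hQrec n z) (hQ00 n) (fun k => hdrec n k) (hdnn n)
            (hwd (n+1)) hQn hQn1
    exact fun n => (key n).1
  -- real quantities
  set p : ℕ → ℝ := fun n => ‖P n 0‖ with hpdef
  set q : ℕ → ℝ := fun n => ‖Q n 0‖ with hqdef
  set c : ℕ → ℝ := fun n => Real.sqrt (p n ^ 2 + q n ^ 2) with hcdef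
  have hp0 : ∀ n, 0 ≤ p n := fun n => norm_nonneg _
  have hq0 : ∀ n, 0 ≤ q n := fun n => norm_nonneg _
  have hc0 : ∀ n, 0 ≤ c n := fun n => Real.sqrt_nonneg _
  have hcsq : ∀ n, c n ^ 2 = p n ^ 2 + q n ^ 2 := fun n => Real.sq_sqrt (by positivity)
  have hpc : ∀ n, p n ≤ c n := fun n => by
    nlinarith [hcsq n, hc0 n, hp0 n, sq_nonneg (q n), sq_nonneg (c n - p n), sq_nonneg (c n + p n)]
  have hqc : ∀ n, q n ≤ c n := fun n => by
    nlinarith [hcsq n, hc0 n, hq0 n, sq_nonneg (p n), sq_nonneg (c n - q n), sq_nonneg (c n + q n)]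
  have hDle : ∀ n k, ‖D n k‖ ≤ c n * c k := by
    intro n k
    have h1 : ‖D n k‖ ≤ q n * p k + p n * q k := by
      simp only [hDdef]
      refine (norm_sub_le _ _).trans ?_
      rw [norm_mul, norm_mul]
    refine h1.trans ?_
    nlinarith [hcsq n, hcsq k, hc0 n, hc0 k, sq_nonneg (q n * q k - p n * p k),
      mul_nonneg (hc0 n) (hc0 k), sq_nonneg (c n * c k + q n * p k + p n * q k),
      sq_nonneg (c n * c k - q n * p k - p n * q k)]
  have hrpow2 : ∀ (x : ℝ), 0 ≤ x → x ^ (2*α) = (x^2) ^ α := by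
    intro x hx
    rw [← Real.rpow_natCast x 2, ← Real.rpow_mul hx]
    norm_num
  -- summability of squares from summability of 2α-powers
  have sq_of_rpow : ∀ f : ℕ → ℝ, (∀ n, 0 ≤ f n) → Summable (fun n => f n ^ (2*α)) →
      Summable (fun n => f n ^ 2) := by
    intro f hf hs
    have h2α : (0:ℝ) < 2*α := by linarith
    have hev : ∀ᶠ n in Filter.atTop, f n ^ (2*α) < 1 :=
      hs.tendsto_atTop_zero.eventually (gt_mem_nhds one_pos)
    obtain ⟨N, hN⟩ := Filter.eventually_atTop.1 hev
    refine (summable_nat_add_iff N).1 ?_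
    refine Summable.of_nonneg_of_le (fun n => sq_nonneg _) ?_ ((summable_nat_add_iff N).2 hs)
    intro n
    rcases (hf (n+N)).eq_or_lt with h|h
    · rw [← h]
      norm_num [Real.zero_rpow h2α.ne']
    · have hle1 : f (n+N) ≤ 1 := by
        by_contra hgt
        push_neg at hgt
        have h1 : 1 < f (n+N) ^ (2*α) :=
          (Real.one_lt_rpow_iff_of_pos h).2 (Or.inl ⟨hgt, h2α⟩)
        have h2 := hN (n+N) (Nat.le_add_left N n)
        linarith
      calc f (n+N)^2 = f (n+N) ^ ((2:ℕ):ℝ) := (Real.rpow_natCast _ 2).symm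
        _ ≤ f (n+N) ^ (2*α) :=
            Real.rpow_le_rpow_of_exponent_ge h hle1 (by push_cast; linarith)
  -- main construction
  have main : (Summable (fun n => ‖P n 0‖ ^ (2 * α)) ∧
      Summable (fun n => ‖Q n 0‖ ^ (2 * α))) →
      ((∀ z : ℂ, Summable (fun n => ‖P n z‖ ^ (2 * α)) ∧
        Summable (fun n => ‖Q n z‖ ^ (2 * α))) ∧
      Summable (fun n => ‖P n 0‖ ^ 2 + ‖Q n 0‖ ^ 2) ∧
      Summable (fun n => (1 / b n) ^ α) ∧
      ∀ z : ℂ, Real.sqrt (∑' n, ‖P n z‖ ^ 2) ≤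
        Real.sqrt (∑' n, (‖P n 0‖ ^ 2 + ‖Q n 0‖ ^ 2)) *
          Real.exp ((1 / α) *
            (∑' n, (‖P n 0‖ ^ (2 * α) + ‖Q n 0‖ ^ (2 * α))) *
            ‖z‖ ^ α)) := by
    rintro ⟨hsP, hsQ⟩
    have hsP' : Summable (fun n => p n ^ (2*α)) := hsP
    have hsQ' : Summable (fun n => q n ^ (2*α)) := hsQ
    have hS0sum : Summable (fun n => p n ^ (2*α) + q n ^ (2*α)) := hsP'.add hsQ'
    set S0 : ℝ := ∑' n, (p n ^ (2*α) + q n ^ (2*α)) with hS0def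
    have hg0 : ∀ n, 0 ≤ p n ^ (2*α) + q n ^ (2*α) := fun n => by positivity
    have hpartial : ∀ n, ∑ k ∈ Finset.range n, (p k ^ (2*α) + q k ^ (2*α)) ≤ S0 :=
      fun n => Summable.sum_le_tsum _ (fun i _ => hg0 i) hS0sum
    have hterm : ∀ k, (c k ^ 2) ^ α ≤ p k ^ (2*α) + q k ^ (2*α) := by
      intro k
      rw [hcsq k, hrpow2 (p k) (hp0 k), hrpow2 (q k) (hq0 k)]
      exact real_rpow_add_le (by positivity) (by positivity) hα0.le hα1
    -- squares summable
    have hsq : Summable (fun n => p n ^ 2 + q n ^ 2) :=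
      (sq_of_rpow p hp0 hsP').add (sq_of_rpow q hq0 hsQ')
    -- 1/b summable
    have hbsum : Summable (fun n => (1 / b n) ^ α) := by
      have hbd : ∀ n, (1 / b n : ℝ) ≤ c (n+1) * c n := by
        intro n
        have h := congrArg norm (hW n)
        rw [norm_mul, norm_one, Complex.norm_real, Real.norm_eq_abs, abs_of_pos (hb n)] at h
        have h2 : ‖Q (n+1) 0 * P n 0 - P (n+1) 0 * Q n 0‖ = 1 / b n := by
          rw [eq_div_iff (hb n).ne', mul_comm]
          exact h
        have h3 := hDle (n+1) n
        simp only [hDdef] at h3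
        rw [h2] at h3
        exact h3
      refine Summable.of_nonneg_of_le (fun n => Real.rpow_nonneg (one_div_pos.2 (hb n)).le α)
        (fun n => ?_) ((((summable_nat_add_iff 1).2 hS0sum).add hS0sum).mul_left (2:ℝ)⁻¹)
      · 
        have hb1 : (0:ℝ) ≤ 1 / b n := (one_div_pos.2 (hb n)).le
        have e1 : (1 / b n) ^ α ≤ (c (n+1) * c n) ^ α :=
          Real.rpow_le_rpow hb1 (hbd n) hα0.le
        have e2 : (c (n+1) * c n) ^ α = c (n+1) ^ α * c n ^ α :=
          Real.mul_rpow (hc0 _) (hc0 _)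
        have e3 : ∀ m, (c m ^ α) ^ 2 = (c m ^ 2) ^ α := by
          intro m
          rw [← Real.rpow_natCast (c m ^ α) 2, ← Real.rpow_mul (hc0 m), ← Real.rpow_natCast (c m) 2,
            ← Real.rpow_mul (hc0 m)]
          ring_nf
        have e4 : c (n+1) ^ α * c n ^ α ≤ ((c (n+1) ^ α)^2 + (c n ^ α)^2) / 2 := by
          nlinarith [sq_nonneg (c (n+1) ^ α - c n ^ α)]
        have e5 : ((c (n+1) ^ α)^2 + (c n ^ α)^2) / 2
            ≤ (2:ℝ)⁻¹ * ((p (n+1) ^ (2*α) + q (n+1) ^ (2*α)) + (p n ^ (2*α) + q n ^ (2*α))) := by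
          have g1 := (e3 (n+1)).trans_le (hterm (n+1))
          have g2 := (e3 n).trans_le (hterm n)
          linarith
        calc (1 / b n) ^ α ≤ c (n+1) ^ α * c n ^ α := by rw [← e2]; exact e1
          _ ≤ _ := e4.trans e5
    -- growth bound for each z
    have growth : ∀ z : ℂ, ∀ n,
        ‖P n z‖ ≤ c n * Real.exp ((1/α) * S0 * ‖z‖ ^ α) ∧
        ‖Q n z‖ ≤ c n * Real.exp ((1/α) * S0 * ‖z‖ ^ α) := by
      intro z
      set t : ℝ := ‖z‖ with htdef
      have ht0 : 0 ≤ t := norm_nonneg z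
      have hfac : ∀ k, (1:ℝ) ≤ 1 + t * c k ^ 2 := by
        intro k
        have : (0:ℝ) ≤ t * c k ^ 2 := by positivity
        linarith
      have hfac0 : ∀ k, (0:ℝ) ≤ 1 + t * c k ^ 2 := fun k => le_trans zero_le_one (hfac k)
      have hPi1 : ∀ n, (1:ℝ) ≤ ∏ k ∈ Finset.range n, (1 + t * c k ^ 2) := by
        intro n
        calc (1:ℝ) = ∏ k ∈ Finset.range n, 1 := by simp
          _ ≤ _ := Finset.prod_le_prod (by intros; norm_num) (fun k _ => hfac k)
      have hgron : ∀ n, 1 + t * ∑ k ∈ Finset.range n,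
          c k ^ 2 * ∏ j ∈ Finset.range k, (1 + t * c j ^ 2)
          ≤ ∏ k ∈ Finset.range n, (1 + t * c k ^ 2) := by
        intro n
        induction n with
        | zero => simp
        | succ n ih =>
          rw [Finset.sum_range_succ, Finset.prod_range_succ]
          have hPin : (0:ℝ) ≤ ∏ k ∈ Finset.range n, (1 + t * c k ^ 2) :=
            le_trans zero_le_one (hPi1 n)
          nlinarith [ih, mul_nonneg (mul_nonneg ht0 (sq_nonneg (c n))) hPin]
      have hbnd : ∀ n,
          ‖P n z‖ ≤ c n * ∏ k ∈ Finset.range n, (1 + t * c k ^ 2) ∧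
          ‖Q n z‖ ≤ c n * ∏ k ∈ Finset.range n, (1 + t * c k ^ 2) := by
        intro n
        induction n using Nat.strong_induction_on with
        | _ n ih =>
          have hgen : ∀ (u : ℕ → ℂ → ℂ),
              (∀ m, u m z = u m 0 + z * ∑ k ∈ Finset.range m, D m k * u k z) →
              (∀ m, ‖u m 0‖ ≤ c m) →
              (∀ k, k < n → ‖u k z‖ ≤ c k * ∏ j ∈ Finset.range k, (1 + t * c j ^ 2)) →
              ‖u n z‖ ≤ c n * ∏ k ∈ Finset.range n, (1 + t * c k ^ 2) := by
            intro u hidu hu0 ihu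
            rw [hidu n]
            calc ‖u n 0 + z * ∑ k ∈ Finset.range n, D n k * u k z‖
                ≤ ‖u n 0‖ +
                  t * ‖∑ k ∈ Finset.range n, D n k * u k z‖ := by
                  refine (norm_add_le _ _).trans ?_
                  rw [norm_mul]
              _ ≤ c n + t * ∑ k ∈ Finset.range n,
                    (c n * c k) * (c k * ∏ j ∈ Finset.range k, (1 + t * c j ^ 2)) := by
                  refine add_le_add (hu0 n) (mul_le_mul_of_nonneg_left ?_ ht0)
                  refine (norm_sum_le _ _).trans ?_
                  refine Finset.sum_le_sum ?_
                  intro k hk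
                  rw [norm_mul]
                  exact mul_le_mul (hDle n k) (ihu k (Finset.mem_range.1 hk))
                    (norm_nonneg _) (mul_nonneg (hc0 n) (hc0 k))
              _ = c n * (1 + t * ∑ k ∈ Finset.range n,
                    c k ^ 2 * ∏ j ∈ Finset.range k, (1 + t * c j ^ 2)) := by
                  rw [show ∑ k ∈ Finset.range n,
                      (c n * c k) * (c k * ∏ j ∈ Finset.range k, (1 + t * c j ^ 2))
                      = ∑ k ∈ Finset.range n,
                      c n * (c k ^ 2 * ∏ j ∈ Finset.range k, (1 + t * c j ^ 2)) from
                    Finset.sum_congr rfl (fun k _ => by ring), ← Finset.mul_sum]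
                  ring
              _ ≤ c n * ∏ k ∈ Finset.range n, (1 + t * c k ^ 2) :=
                  mul_le_mul_of_nonneg_left (hgron n) (hc0 n)
          exact ⟨hgen P (fun m => (hid z m).1) hpc (fun k hk => (ih k hk).1),
            hgen Q (fun m => (hid z m).2) hqc (fun k hk => (ih k hk).2)⟩
      have hPiE : ∀ n, ∏ k ∈ Finset.range n, (1 + t * c k ^ 2)
          ≤ Real.exp ((1/α) * S0 * t ^ α) := by
        intro n
        calc ∏ k ∈ Finset.range n, (1 + t * c k ^ 2)
            ≤ ∏ k ∈ Finset.range n, Real.exp ((t * c k ^ 2) ^ α / α) :=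
              Finset.prod_le_prod (fun k _ => hfac0 k)
                (fun k _ => one_add_le_exp_rpow hα0 hα1 (by positivity))
          _ = Real.exp (∑ k ∈ Finset.range n, (t * c k ^ 2) ^ α / α) :=
              (Real.exp_sum _ _).symm
          _ ≤ Real.exp ((1/α) * S0 * t ^ α) := by
              rw [Real.exp_le_exp]
              have h2 : ∑ k ∈ Finset.range n, (t * c k ^ 2) ^ α ≤ t ^ α * S0 := by
                calc ∑ k ∈ Finset.range n, (t * c k ^ 2) ^ α
                    ≤ ∑ k ∈ Finset.range n, t ^ α * (p k ^ (2*α) + q k ^ (2*α)) := by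
                      refine Finset.sum_le_sum fun k _ => ?_
                      rw [Real.mul_rpow ht0 (by positivity)]
                      exact mul_le_mul_of_nonneg_left (hterm k) (Real.rpow_nonneg ht0 α)
                  _ = t ^ α * ∑ k ∈ Finset.range n, (p k ^ (2*α) + q k ^ (2*α)) :=
                      (Finset.mul_sum _ _ _).symm
                  _ ≤ t ^ α * S0 :=
                      mul_le_mul_of_nonneg_left (hpartial n) (Real.rpow_nonneg ht0 α)
              rw [← Finset.sum_div]
              calc (∑ k ∈ Finset.range n, (t * c k ^ 2) ^ α) / α ≤ (t ^ α * S0) / α :=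
                    (div_le_div_iff_of_pos_right hα0).2 h2
                _ = (1/α) * S0 * t ^ α := by ring
      intro n
      exact ⟨(hbnd n).1.trans (mul_le_mul_of_nonneg_left (hPiE n) (hc0 n)),
        (hbnd n).2.trans (mul_le_mul_of_nonneg_left (hPiE n) (hc0 n))⟩
    -- conclusions
    refine ⟨?_, hsq, hbsum, ?_⟩
    · intro z
      set E : ℝ := Real.exp ((1/α) * S0 * ‖z‖ ^ α) with hEdef
      have hE0 : 0 ≤ E := (Real.exp_pos _).le
      have hE2α : (0:ℝ) ≤ E ^ (2*α) := Real.rpow_nonneg hE0 _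
      have gen : ∀ (u : ℕ → ℂ → ℂ), (∀ n, ‖u n z‖ ≤ c n * E) →
          Summable (fun n => ‖u n z‖ ^ (2*α)) := by
        intro u hu
        refine Summable.of_nonneg_of_le (fun n => Real.rpow_nonneg (norm_nonneg _) _)
          ?_ (hS0sum.mul_left (E ^ (2*α)))
        intro n
        calc ‖u n z‖ ^ (2*α) ≤ (c n * E) ^ (2*α) :=
              Real.rpow_le_rpow (norm_nonneg _) (hu n) (by linarith)
          _ = c n ^ (2*α) * E ^ (2*α) := Real.mul_rpow (hc0 n) hE0
          _ = (c n ^ 2) ^ α * E ^ (2*α) := by rw [hrpow2 (c n) (hc0 n)]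
          _ ≤ (p n ^ (2*α) + q n ^ (2*α)) * E ^ (2*α) :=
              mul_le_mul_of_nonneg_right (hterm n) hE2α
          _ = E ^ (2*α) * (p n ^ (2*α) + q n ^ (2*α)) := by ring
      exact ⟨gen P (fun n => (growth z n).1), gen Q (fun n => (growth z n).2)⟩
    · intro z
      set E : ℝ := Real.exp ((1/α) * S0 * ‖z‖ ^ α) with hEdef
      have hE0 : 0 ≤ E := (Real.exp_pos _).le
      have hsqb : ∀ n, ‖P n z‖ ^ 2 ≤ E^2 * (p n ^ 2 + q n ^ 2) := by
        intro n
        have h1 : ‖P n z‖ ^ 2 ≤ (c n * E)^2 := by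
          have := (growth z n).1
          nlinarith [norm_nonneg (P n z), mul_nonneg (hc0 n) hE0]
        calc ‖P n z‖ ^ 2 ≤ (c n * E)^2 := h1
          _ = E^2 * (p n ^2 + q n ^2) := by rw [mul_pow, hcsq n]; ring
      have hsPz : Summable (fun n => ‖P n z‖ ^ 2) :=
        Summable.of_nonneg_of_le (fun n => sq_nonneg _) hsqb (hsq.mul_left _)
      have htsum : ∑' n, ‖P n z‖ ^ 2 ≤ E^2 * ∑' n, (p n ^ 2 + q n ^ 2) := by
        calc ∑' n, ‖P n z‖ ^ 2 ≤ ∑' n, E^2 * (p n ^ 2 + q n ^ 2) :=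
              Summable.tsum_le_tsum hsqb hsPz (hsq.mul_left _)
          _ = E^2 * ∑' n, (p n ^ 2 + q n ^ 2) := tsum_mul_left
      calc Real.sqrt (∑' n, ‖P n z‖ ^ 2)
          ≤ Real.sqrt (E^2 * ∑' n, (p n ^ 2 + q n ^ 2)) := Real.sqrt_le_sqrt htsum
        _ = E * Real.sqrt (∑' n, (p n ^ 2 + q n ^ 2)) := by
            rw [Real.sqrt_mul (sq_nonneg E), Real.sqrt_sq hE0]
        _ = Real.sqrt (∑' n, (p n ^ 2 + q n ^ 2)) * E := mul_comm _ _
  exact ⟨⟨fun h => (main h).1, fun h => (h 0)⟩,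
    fun h => ⟨(main h).2.1, (main h).2.2.1, (main h).2.2.2⟩⟩
end

section
/- Let (b_n)_{n≥0} be positive real numbers with sup_{n≥0} b_n = ∞, and suppose there exists n_0 such that either b_n² ≤ b_{n-1}·b_{n+1} for all n ≥ n_0, or b_n² ≥ b_{n-1}·b_{n+1} for all n ≥ n_0. Then (b_n) is eventually strictly increasing to infinity: there exists N such that b_n < b_{n+1} for all n ≥ N, and b_n → ∞ as n → ∞. -/
lemma auxTail (b : ℕ → ℝ) (N : ℕ) (h : ∀ n ≥ N, b n ≤ b (n+1)) :
    ∀ m n, N ≤ m → m ≤ n → b m ≤ b n := by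
  intro m n hNm hmn
  induction n, hmn using Nat.le_induction with
  | base => exact le_refl _
  | succ n hn ih => exact ih.trans (h n (hNm.trans hn))

lemma auxTail' (b : ℕ → ℝ) (N : ℕ) (h : ∀ n ≥ N, b (n+1) ≤ b n) :
    ∀ m n, N ≤ m → m ≤ n → b n ≤ b m := by
  intro m n hNm hmn
  induction n, hmn using Nat.le_induction with
  | base => exact le_refl _
  | succ n hn ih => exact (h n (hNm.trans hn)).trans ih

lemma auxBdd (b : ℕ → ℝ) (N : ℕ) (h : ∀ n ≥ N, b (n+1) ≤ b n) :
    BddAbove (Set.range b) := by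
  refine ⟨(Finset.range (N+1)).sup' Finset.nonempty_range_add_one b, ?_⟩
  rintro x ⟨n, rfl⟩
  rcases le_or_gt n N with hn | hn
  · exact Finset.le_sup' b (Finset.mem_range.2 (by omega))
  · exact (auxTail' b N h N n le_rfl hn.le).trans
      (Finset.le_sup' b (Finset.mem_range.2 (by omega)))

lemma auxTendsto (b : ℕ → ℝ) (N : ℕ) (h : ∀ n ≥ N, b n < b (n+1))
    (hub : ¬ BddAbove (Set.range b)) : Filter.Tendsto b Filter.atTop Filter.atTop := by
  rw [Filter.tendsto_atTop]
  intro M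
  set C := max M ((Finset.range (N+1)).sup' Finset.nonempty_range_add_one b) with hC
  obtain ⟨y, ⟨n, rfl⟩, hy⟩ := not_bddAbove_iff.1 hub C
  have hnN : N ≤ n := by
    by_contra hlt
    push_neg at hlt
    have : b n ≤ C := le_trans (Finset.le_sup' b (Finset.mem_range.2 (by omega)))
      (le_max_right _ _)
    exact absurd hy (not_lt.2 this)
  refine Filter.eventually_atTop.2 ⟨n, fun k hk => ?_⟩
  have hbk : b n ≤ b k := auxTail b N (fun j hj => (h j hj).le) n k hnN hk
  have hMC : M ≤ C := le_max_left _ _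
  linarith

/-- Lemma (Berg–Szwarc, Lemma 3.1): if `(b n)` is a sequence of positive reals with
`sup b n = ∞` which is eventually log-convex or eventually log-concave, then `(b n)` is
eventually strictly increasing and tends to infinity. -/
theorem stmt_3 (b : ℕ → ℝ) (hb : ∀ n, 0 < b n)
    (hub : ¬ BddAbove (Set.range b))
    (hreg : (∃ n0, ∀ n ≥ n0, (b (n+1)) ^ 2 ≤ b n * b (n+2)) ∨
            (∃ n0, ∀ n ≥ n0, b n * b (n+2) ≤ (b (n+1)) ^ 2)) :
    (∃ N, ∀ n ≥ N, b n < b (n+1)) ∧ Filter.Tendsto b Filter.atTop Filter.atTop := by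
  have key : ∃ N, ∀ n ≥ N, b n < b (n+1) := by
    rcases hreg with ⟨n0, hc⟩ | ⟨n0, hc⟩
    · -- log-convex
      have hr : ∀ n ≥ n0, b (n+1) / b n ≤ b (n+1+1) / b (n+1) := by
        intro n hn
        rw [div_le_div_iff₀ (hb n) (hb (n+1))]
        nlinarith [hc n hn]
      have hm : ∃ m ≥ n0, b m < b (m+1) := by
        by_contra hno
        push_neg at hno
        exact hub (auxBdd b n0 hno)
      obtain ⟨m, hm0, hm1⟩ := hm
      refine ⟨m, fun n hn => ?_⟩
      have h1 : b (m+1) / b m ≤ b (n+1) / b n :=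
        auxTail (fun k => b (k+1) / b k) n0 hr m n hm0 hn
      have h2 : 1 < b (m+1) / b m := (one_lt_div (hb m)).2 hm1
      exact (one_lt_div (hb n)).1 (h2.trans_le h1)
    · -- log-concave
      have hr : ∀ n ≥ n0, b (n+1+1) / b (n+1) ≤ b (n+1) / b n := by
        intro n hn
        rw [div_le_div_iff₀ (hb (n+1)) (hb n)]
        nlinarith [hc n hn]
      refine ⟨n0, fun n hn => ?_⟩
      by_contra hle
      push_neg at hle
      have hall : ∀ k ≥ n, b (k+1) ≤ b k := by
        intro k hk
        have h1 : b (k+1) / b k ≤ b (n+1) / b n :=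
          auxTail' (fun j => b (j+1) / b j) n0 hr n k hn hk
        have h2 : b (n+1) / b n ≤ 1 := (div_le_one (hb n)).2 hle
        have := h1.trans h2
        rwa [div_le_one (hb k)] at this
      exact hub (auxBdd b n hall)
  obtain ⟨N, hN⟩ := key
  exact ⟨⟨N, hN⟩, auxTendsto b N hN hub⟩
end

section
/- Assume the Berezanskii conditions. Then n/b_n → 0, n·P_n(0)² → 0 and n·Q_n(0)² → 0 as n → ∞ (i.e. 1/b_n, P_n(0)² and Q_n(0)² are all o(1/n)). -/
open Filter

/-- If `u` is nonnegative and satisfies `u (n+2) ≤ α n * u (n+1) + u n` for `n ≥ N`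
with `α` nonnegative summable, then `u` is bounded on `[N, ∞)`. -/
lemma aux_bdd (u α : ℕ → ℝ) (hu : ∀ n, 0 ≤ u n) (hα : ∀ n, 0 ≤ α n)
    (hsum : Summable α) (N : ℕ)
    (hrec : ∀ n ≥ N, u (n+2) ≤ α n * u (n+1) + u n) :
    ∃ C, ∀ n ≥ N, u n ≤ C := by
  set M : ℕ → ℝ := fun n => max (u (n+1)) (u n) with hM
  have hM0 : ∀ n, 0 ≤ M n := fun n => le_trans (hu n) (le_max_right _ _)
  have hstep : ∀ n ≥ N, M (n+1) ≤ (1 + α n) * M n := by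
    intro n hn
    have h1 : u (n+2) ≤ (1 + α n) * M n := by
      calc u (n+2) ≤ α n * u (n+1) + u n := hrec n hn
        _ ≤ α n * M n + M n := by
            have h1 : u (n+1) ≤ M n := le_max_left _ _
            have h2 : u n ≤ M n := le_max_right _ _
            have := mul_le_mul_of_nonneg_left h1 (hα n)
            linarith
        _ = (1 + α n) * M n := by ring
    have h2 : u (n+1) ≤ (1 + α n) * M n := by
      calc u (n+1) ≤ M n := le_max_left _ _
        _ = 1 * M n := (one_mul _).symm
        _ ≤ (1 + α n) * M n := by
            apply mul_le_mul_of_nonneg_right _ (hM0 n)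
            linarith [hα n]
    exact max_le h1 h2
  have key : ∀ n, N ≤ n → M n ≤ M N * ∏ k ∈ Finset.Ico N n, (1 + α k) := by
    intro n hn
    induction n, hn using Nat.le_induction with
    | base => simp
    | succ n hn ih =>
      calc M (n+1) ≤ (1 + α n) * M n := hstep n hn
        _ ≤ (1 + α n) * (M N * ∏ k ∈ Finset.Ico N n, (1 + α k)) := by
            apply mul_le_mul_of_nonneg_left ih; linarith [hα n]
        _ = M N * ∏ k ∈ Finset.Ico N (n+1), (1 + α k) := by
            rw [Finset.prod_Ico_succ_top hn]; ring
  have prodle : ∀ n, (∏ k ∈ Finset.Ico N n, (1 + α k)) ≤ Real.exp (∑' k, α k) := by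
    intro n
    calc (∏ k ∈ Finset.Ico N n, (1 + α k)) ≤ ∏ k ∈ Finset.Ico N n, Real.exp (α k) := by
          apply Finset.prod_le_prod
          · intro i _; linarith [hα i]
          · intro i _; linarith [Real.add_one_le_exp (α i)]
      _ = Real.exp (∑ k ∈ Finset.Ico N n, α k) := (Real.exp_sum _ _).symm
      _ ≤ Real.exp (∑' k, α k) := by
          apply Real.exp_le_exp.2
          exact Summable.sum_le_tsum _ (fun i _ => hα i) hsum
  refine ⟨M N * Real.exp (∑' k, α k), fun n hn => ?_⟩
  calc u n ≤ M n := le_max_right _ _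
    _ ≤ M N * ∏ k ∈ Finset.Ico N n, (1 + α k) := key n hn
    _ ≤ M N * Real.exp (∑' k, α k) := mul_le_mul_of_nonneg_left (prodle n) (hM0 N)

/-- A nonnegative summable sequence which is antitone from some point satisfies `n * g n → 0`. -/
lemma aux_nmul (g : ℕ → ℝ) (hg : ∀ n, 0 ≤ g n) (hsum : Summable g) (N : ℕ)
    (hanti : ∀ m n, N ≤ m → m ≤ n → g n ≤ g m) :
    Tendsto (fun n : ℕ => (n : ℝ) * g n) atTop (nhds 0) := by
  rw [Metric.tendsto_atTop]
  intro ε hε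
  have htail : Tendsto (fun i => ∑' k, g (k + i)) atTop (nhds 0) :=
    tendsto_sum_nat_add g
  have h1 : ∀ᶠ i in atTop, ∑' k, g (k + i) < ε/2 := by
    have := htail.eventually (eventually_lt_nhds (by linarith : (0:ℝ) < ε/2))
    simpa using this
  obtain ⟨m, hm, hmN⟩ := (h1.and (eventually_ge_atTop N)).exists
  have hg0 : Tendsto g atTop (nhds 0) := hsum.tendsto_atTop_zero
  have h2 : ∀ᶠ n in atTop, (m : ℝ) * g n < ε/2 := by
    have h3 : Tendsto (fun n => (m : ℝ) * g n) atTop (nhds 0) := by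
      simpa using hg0.const_mul (m : ℝ)
    have := h3.eventually (eventually_lt_nhds (by linarith : (0:ℝ) < ε/2))
    simpa using this
  obtain ⟨M0, hM0⟩ := eventually_atTop.1 (h2.and (eventually_ge_atTop (m+1)))
  refine ⟨M0, fun n hn => ?_⟩
  obtain ⟨hmn2, hmn⟩ := hM0 n hn
  have hmn' : m ≤ n := le_trans (Nat.le_succ m) hmn
  have hsum' : Summable (fun k => g (k + m)) := (summable_nat_add_iff m).2 hsum
  have hb1 : ((n : ℝ) - m) * g n ≤ ∑ k ∈ Finset.Ico m n, g k := by
    have e1 : ∑ k ∈ Finset.Ico m n, g n = ((n : ℝ) - m) * g n := by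
      rw [Finset.sum_const, Nat.card_Ico, nsmul_eq_mul, Nat.cast_sub hmn']
    rw [← e1]
    apply Finset.sum_le_sum
    intro i hi
    rcases Finset.mem_Ico.1 hi with ⟨hi1, hi2⟩
    exact hanti i n (le_trans hmN hi1) (le_of_lt hi2)
  have hb2 : ∑ k ∈ Finset.Ico m n, g k ≤ ∑' k, g (k + m) := by
    rw [Finset.sum_Ico_eq_sum_range]
    calc ∑ k ∈ Finset.range (n - m), g (m + k)
        = ∑ k ∈ Finset.range (n - m), g (k + m) := by
          apply Finset.sum_congr rfl; intro i _; rw [Nat.add_comm]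
      _ ≤ ∑' k, g (k + m) := Summable.sum_le_tsum _ (fun i _ => hg _) hsum'
  have hfinal : (n : ℝ) * g n < ε := by
    have : ((n : ℝ) - m) * g n < ε/2 := lt_of_le_of_lt (le_trans hb1 hb2) hm
    have hmgn : (m : ℝ) * g n < ε/2 := hmn2
    nlinarith [hg n]
  rw [Real.dist_eq]
  rw [sub_zero, abs_of_nonneg (mul_nonneg (Nat.cast_nonneg n) (hg n))]
  exact hfinal

lemma berg_aux (a b : ℕ → ℝ) (hb : ∀ n, 0 < b n) (p : ℕ → ℝ) (hp : ∀ n, 0 ≤ p n)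
    (hrec : ∀ n, b (n+1) * p (n+2) ≤ |a (n+1)| * p (n+1) + b n * p n)
    (hαsum : Summable (fun n => |a (n+1)| / Real.sqrt (b (n+1) * b n)))
    (hreg : (∃ n0, ∀ n ≥ n0, (b (n+1)) ^ 2 ≤ b n * b (n+2)) ∨
            (∃ n0, ∀ n ≥ n0, b n * b (n+2) ≤ (b (n+1)) ^ 2))
    (h1 : Tendsto (fun n : ℕ => (n : ℝ) / b n) atTop (nhds 0)) :
    Tendsto (fun n : ℕ => (n : ℝ) * p n ^ 2) atTop (nhds 0) := by
  set sb : ℕ → ℝ := fun n => Real.sqrt (b n) with hsb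
  have hsbp : ∀ n, 0 < sb n := fun n => Real.sqrt_pos.2 (hb n)
  have hsplit : ∀ n, Real.sqrt (b (n+1) * b n) = sb (n+1) * sb n := fun n =>
    Real.sqrt_mul (hb (n+1)).le _
  set α : ℕ → ℝ := fun n => |a (n+1)| / Real.sqrt (b (n+1) * b n) with hαdef
  have hα0 : ∀ n, 0 ≤ α n := fun n =>
    div_nonneg (abs_nonneg _) (Real.sqrt_nonneg _)
  have hαeq : ∀ n, α n = |a (n+1)| / (sb (n+1) * sb n) := by
    intro n; rw [hαdef]; simp only [hsplit]
  -- 1/b n → 0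
  have hinvb : Tendsto (fun n : ℕ => 1 / b n) atTop (nhds 0) := by
    apply squeeze_zero' (g := fun n : ℕ => (n : ℝ) / b n)
      (Eventually.of_forall fun n => one_div_nonneg.2 (hb n).le) _ h1
    filter_upwards [eventually_ge_atTop 1] with n hn
    have h1n : (1:ℝ) ≤ n := by exact_mod_cast hn
    gcongr
    exact (hb n).le
  have h1' : Tendsto (fun n : ℕ => ((n : ℝ) + 1) / b n) atTop (nhds 0) := by
    have := h1.add hinvb
    simpa [add_div] using this
  rcases hreg with ⟨n0, hcv⟩ | ⟨n0, hcc⟩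
  · -- log-convex case: weight u n = sqrt(b n) * p (n+1)
    set u : ℕ → ℝ := fun n => sb n * p (n+1) with hu
    have hu0 : ∀ n, 0 ≤ u n := fun n => mul_nonneg (hsbp n).le (hp _)
    have hrecu : ∀ n ≥ n0, u (n+2) ≤ α (n+1) * u (n+1) + u n := by
      intro n hn
      have R := hrec (n+1)
      have hb1 : b (n+1) ≤ sb (n+2) * sb n := by
        have h' : Real.sqrt ((b (n+1))^2) ≤ Real.sqrt (b n * b (n+2)) :=
          Real.sqrt_le_sqrt (hcv n hn)
        rw [Real.sqrt_sq (hb (n+1)).le, Real.sqrt_mul (hb n).le] at h'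
        calc b (n+1) ≤ Real.sqrt (b n) * Real.sqrt (b (n+2)) := h'
          _ = sb (n+2) * sb n := by rw [hsb]; ring
      have hkey : b (n+2) * p (n+3) ≤ |a (n+2)| * p (n+2) + (sb (n+2) * sb n) * p (n+1) := by
        have h2 : b (n+1) * p (n+1) ≤ (sb (n+2) * sb n) * p (n+1) :=
          mul_le_mul_of_nonneg_right hb1 (hp _)
        linarith [R]
      have hαu : α (n+1) * u (n+1) = |a (n+2)| * p (n+2) / sb (n+2) := by
        rw [hαeq (n+1), hu]
        field_simp [(hsbp (n+1)).ne', (hsbp (n+2)).ne']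
      have hgoal : sb (n+2) * p (n+3) ≤ |a (n+2)| * p (n+2) / sb (n+2) + sb n * p (n+1) := by
        rw [div_add' _ _ _ (hsbp (n+2)).ne', le_div_iff₀ (hsbp (n+2))]
        calc sb (n+2) * p (n+3) * sb (n+2) = (sb (n+2) * sb (n+2)) * p (n+3) := by ring
          _ = b (n+2) * p (n+3) := by rw [hsb, Real.mul_self_sqrt (hb (n+2)).le]
          _ ≤ |a (n+2)| * p (n+2) + (sb (n+2) * sb n) * p (n+1) := hkey
          _ = |a (n+2)| * p (n+2) + sb n * p (n+1) * sb (n+2) := by ring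
      show sb (n+2) * p (n+3) ≤ α (n+1) * u (n+1) + u n
      rw [hαu]
      exact hgoal
    obtain ⟨C, hC⟩ := aux_bdd u (fun n => α (n+1)) hu0 (fun n => hα0 _)
      ((summable_nat_add_iff 1).2 hαsum) n0 hrecu
    have hC2 : ∀ n ≥ n0, b n * p (n+1) ^ 2 ≤ C ^ 2 := by
      intro n hn
      have h3 := hC n hn
      have h0 : 0 ≤ u n := hu0 n
      have h4 := pow_le_pow_left₀ h0 h3 2
      calc b n * p (n+1) ^ 2 = (sb n * p (n+1)) ^ 2 := by
            rw [mul_pow, hsb, Real.sq_sqrt (hb n).le]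
        _ ≤ C ^ 2 := h4
    have htend1 : Tendsto (fun n : ℕ => ((n : ℝ) + 1) * p (n+1) ^ 2) atTop (nhds 0) := by
      apply squeeze_zero' (g := fun n : ℕ => C ^ 2 * (((n : ℝ) + 1) / b n))
        (Eventually.of_forall fun n => by positivity)
      · filter_upwards [eventually_ge_atTop n0] with n hn
        have hp2 : p (n+1) ^ 2 ≤ C ^ 2 / b n := by
          rw [le_div_iff₀ (hb n)]
          linarith [hC2 n hn]
        calc ((n : ℝ) + 1) * p (n+1) ^ 2 ≤ ((n : ℝ) + 1) * (C ^ 2 / b n) :=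
              mul_le_mul_of_nonneg_left hp2 (by positivity)
          _ = C ^ 2 * (((n : ℝ) + 1) / b n) := by ring
      · simpa using h1'.const_mul (C ^ 2)
    have h2 : Tendsto (fun n : ℕ => (((n + 1 : ℕ)) : ℝ) * p (n+1) ^ 2) atTop (nhds 0) := by
      simpa using htend1
    exact (tendsto_add_atTop_iff_nat 1).1 h2
  · -- log-concave case: weight u n = sqrt(b n) * p n
    set u : ℕ → ℝ := fun n => sb n * p n with hu
    have hu0 : ∀ n, 0 ≤ u n := fun n => mul_nonneg (hsbp n).le (hp _)
    have hrecu : ∀ n ≥ n0, u (n+2) ≤ α n * u (n+1) + u n := by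
      intro n hn
      have R := hrec n
      have hb1 : sb n * sb (n+2) ≤ b (n+1) := by
        have h' : Real.sqrt (b n * b (n+2)) ≤ Real.sqrt ((b (n+1))^2) :=
          Real.sqrt_le_sqrt (hcc n hn)
        rw [Real.sqrt_sq (hb (n+1)).le, Real.sqrt_mul (hb n).le] at h'
        exact h'
      have hkey : (sb n * sb (n+2)) * p (n+2) ≤ |a (n+1)| * p (n+1) + b n * p n := by
        have h2 : (sb n * sb (n+2)) * p (n+2) ≤ b (n+1) * p (n+2) :=
          mul_le_mul_of_nonneg_right hb1 (hp _)
        linarith [R]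
      have hαu : α n * u (n+1) = |a (n+1)| * p (n+1) / sb n := by
        rw [hαeq n, hu]
        field_simp [(hsbp n).ne', (hsbp (n+1)).ne']
      have hgoal : sb (n+2) * p (n+2) ≤ |a (n+1)| * p (n+1) / sb n + sb n * p n := by
        rw [div_add' _ _ _ (hsbp n).ne', le_div_iff₀ (hsbp n)]
        calc sb (n+2) * p (n+2) * sb n = (sb n * sb (n+2)) * p (n+2) := by ring
          _ ≤ |a (n+1)| * p (n+1) + b n * p n := hkey
          _ = |a (n+1)| * p (n+1) + sb n * p n * sb n := by
              have e : sb n * sb n = b n := by rw [hsb]; exact Real.mul_self_sqrt (hb n).le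
              rw [show sb n * p n * sb n = (sb n * sb n) * p n from by ring, e]
      show sb (n+2) * p (n+2) ≤ α n * u (n+1) + u n
      rw [hαu]
      exact hgoal
    obtain ⟨C, hC⟩ := aux_bdd u α hu0 hα0 hαsum n0 hrecu
    have hC2 : ∀ n ≥ n0, b n * p n ^ 2 ≤ C ^ 2 := by
      intro n hn
      have h3 := hC n hn
      have h4 := pow_le_pow_left₀ (hu0 n) h3 2
      calc b n * p n ^ 2 = (sb n * p n) ^ 2 := by
            rw [mul_pow, hsb, Real.sq_sqrt (hb n).le]
        _ ≤ C ^ 2 := h4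
    apply squeeze_zero' (g := fun n : ℕ => C ^ 2 * ((n : ℝ) / b n))
      (Eventually.of_forall fun n => by positivity)
    · filter_upwards [eventually_ge_atTop n0] with n hn
      have hp2 : p n ^ 2 ≤ C ^ 2 / b n := by
        rw [le_div_iff₀ (hb n)]
        linarith [hC2 n hn]
      calc (n : ℝ) * p n ^ 2 ≤ (n : ℝ) * (C ^ 2 / b n) :=
            mul_le_mul_of_nonneg_left hp2 (by positivity)
        _ = C ^ 2 * ((n : ℝ) / b n) := by ring
    · simpa using h1.const_mul (C ^ 2)

/-- Berg–Szwarc, Corollary 3.4: under the Berezanskii conditions,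
`1/b_n`, `P_n(0)²` and `Q_n(0)²` are all `o(1/n)`. -/
theorem stmt_4 (a b : ℕ → ℝ) (hb : ∀ n, 0 < b n)
    (P Q : ℕ → ℂ → ℂ)
    (hP0 : ∀ z : ℂ, P 0 z = 1) (hQ0 : ∀ z : ℂ, Q 0 z = 0)
    (hPrec0 : ∀ z : ℂ, z * P 0 z = (b 0 : ℂ) * P 1 z + (a 0 : ℂ) * P 0 z)
    (hQrec0 : ∀ z : ℂ, z * Q 0 z = (b 0 : ℂ) * Q 1 z + (a 0 : ℂ) * Q 0 z - 1)
    (hPrec : ∀ (n : ℕ) (z : ℂ), z * P (n+1) z =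
      (b (n+1) : ℂ) * P (n+2) z + (a (n+1) : ℂ) * P (n+1) z + (b n : ℂ) * P n z)
    (hQrec : ∀ (n : ℕ) (z : ℂ), z * Q (n+1) z =
      (b (n+1) : ℂ) * Q (n+2) z + (a (n+1) : ℂ) * Q (n+1) z + (b n : ℂ) * Q n z)
    (hBer : Summable (fun n : ℕ => (1 + |a (n+1)|) / Real.sqrt (b (n+1) * b n)))
    (hreg : (∃ n0, ∀ n ≥ n0, (b (n+1)) ^ 2 ≤ b n * b (n+2)) ∨
            (∃ n0, ∀ n ≥ n0, b n * b (n+2) ≤ (b (n+1)) ^ 2))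
    :
    Filter.Tendsto (fun n : ℕ => (n : ℝ) / b n) Filter.atTop (nhds 0) ∧
    Filter.Tendsto (fun n : ℕ => (n : ℝ) * ‖P n 0‖ ^ 2) Filter.atTop (nhds 0) ∧
    Filter.Tendsto (fun n : ℕ => (n : ℝ) * ‖Q n 0‖ ^ 2) Filter.atTop (nhds 0) := by
  have hsqp : ∀ n : ℕ, 0 < Real.sqrt (b (n+1) * b n) :=
    fun n => Real.sqrt_pos.2 (mul_pos (hb (n+1)) (hb n))
  -- summability of α and c
  have hαsum : Summable (fun n => |a (n+1)| / Real.sqrt (b (n+1) * b n)) := by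
    apply Summable.of_nonneg_of_le
      (fun n => div_nonneg (abs_nonneg _) (Real.sqrt_nonneg _)) _ hBer
    intro n
    gcongr
    linarith [abs_nonneg (a (n+1))]
  set c : ℕ → ℝ := fun n => 1 / Real.sqrt (b (n+1) * b n) with hc
  have hcsum : Summable c := by
    apply Summable.of_nonneg_of_le (fun n => one_div_nonneg.2 (hsqp n).le) _ hBer
    intro n
    gcongr
    linarith [abs_nonneg (a (n+1))]
  have hc0 : Tendsto c atTop (nhds 0) := hcsum.tendsto_atTop_zero
  -- contradiction helper: b cannot be eventually weakly decreasing
  have hcontra : ∀ m, (∀ n ≥ m, b (n+1) ≤ b n) → False := by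
    intro m hdec
    have hle : ∀ n ≥ m, b n ≤ b m := by
      intro n hn
      induction n, hn using Nat.le_induction with
      | base => exact le_refl _
      | succ n hn ih => exact le_trans (hdec n hn) ih
    have hcn : ∀ n ≥ m, 1 / b m ≤ c n := by
      intro n hn
      rw [hc]
      apply one_div_le_one_div_of_le (hsqp n)
      have h1 : Real.sqrt (b (n+1) * b n) ≤ Real.sqrt (b m * b m) := by
        apply Real.sqrt_le_sqrt
        have h2 := hle (n+1) (le_trans hn (Nat.le_succ n))
        have h3 := hle n hn
        nlinarith [hb (n+1), hb n]
      rwa [Real.sqrt_mul_self (hb m).le] at h1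
    have hev : ∀ᶠ n in atTop, c n < 1 / b m := by
      have := hc0.eventually (eventually_lt_nhds (one_div_pos.2 (hb m)))
      simpa using this
    obtain ⟨n, hn1, hn2⟩ := (hev.and (eventually_ge_atTop m)).exists
    exact absurd (hcn n hn2) (not_le.2 hn1)
  -- eventual monotonicity of b
  obtain ⟨N, hmono⟩ : ∃ N, ∀ n ≥ N, b n ≤ b (n+1) := by
    rcases hreg with ⟨n0, hcv⟩ | ⟨n0, hcc⟩
    · by_cases hex : ∃ m ≥ n0, b m ≤ b (m+1)
      · obtain ⟨m, hm, hbm⟩ := hex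
        refine ⟨m, fun n hn => ?_⟩
        induction n, hn using Nat.le_induction with
        | base => exact hbm
        | succ n hn ih =>
          have := hcv n (le_trans hm hn)
          nlinarith [hb (n+1), hb n, hb (n+2)]
      · push_neg at hex
        exact absurd (fun n hn => (hex n hn).le) (fun h => (hcontra n0 h).elim)
    · by_cases hex : ∃ m ≥ n0, b (m+1) < b m
      · obtain ⟨m, hm, hbm⟩ := hex
        exfalso
        apply hcontra m
        intro n hn
        induction n, hn using Nat.le_induction with
        | base => exact hbm.le
        | succ n hn ih =>
          have := hcc n (le_trans hm hn)
          nlinarith [hb (n+1), hb n, hb (n+2)]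
      · push_neg at hex
        exact ⟨n0, hex⟩
  have hmono2 : ∀ m n, N ≤ m → m ≤ n → b m ≤ b n := by
    intro m n hm hmn
    induction n, hmn using Nat.le_induction with
    | base => exact le_refl _
    | succ n hn ih => exact le_trans ih (hmono n (le_trans hm hn))
  -- summability of 1/b
  have hsum1b : Summable (fun n : ℕ => 1 / b n) := by
    have hcs : Summable (fun n => c (n + N)) := (summable_nat_add_iff N).2 hcsum
    have hcomp : ∀ n : ℕ, 1 / b (n + (N+1)) ≤ c (n + N) := by
      intro n
      rw [hc]
      apply one_div_le_one_div_of_le (hsqp (n+N))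
      have h2 : b (n + N) ≤ b (n + N + 1) := hmono (n + N) (Nat.le_add_left N n)
      have h3 : Real.sqrt (b (n+N+1) * b (n+N)) ≤ Real.sqrt (b (n+N+1) * b (n+N+1)) := by
        apply Real.sqrt_le_sqrt
        nlinarith [hb (n+N+1)]
      rw [Real.sqrt_mul_self (hb (n+N+1)).le] at h3
      have he : n + (N+1) = n + N + 1 := rfl
      rw [he]
      exact h3
    have : Summable (fun n : ℕ => 1 / b (n + (N+1))) :=
      Summable.of_nonneg_of_le (fun n => one_div_nonneg.2 (hb _).le) hcomp hcs
    exact (summable_nat_add_iff (N+1)).1 this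
  -- part 1
  have h1 : Tendsto (fun n : ℕ => (n : ℝ) / b n) atTop (nhds 0) := by
    have := aux_nmul (fun n => 1 / b n) (fun n => one_div_nonneg.2 (hb n).le) hsum1b N
      (fun m n hm hmn => one_div_le_one_div_of_le (hb m) (hmono2 m n hm hmn))
    simpa [mul_one_div, div_eq_mul_inv] using this
  -- recurrence inequalities for |P| and |Q|
  have habs : ∀ (F : ℕ → ℂ → ℂ),
      (∀ (n : ℕ) (z : ℂ), z * F (n+1) z =
        (b (n+1) : ℂ) * F (n+2) z + (a (n+1) : ℂ) * F (n+1) z + (b n : ℂ) * F n z) →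
      ∀ n, b (n+1) * ‖F (n+2) 0‖ ≤
        |a (n+1)| * ‖F (n+1) 0‖ + b n * ‖F n 0‖ := by
    intro F hF n
    have h := hF n 0
    rw [zero_mul] at h
    have h2 : (b (n+1) : ℂ) * F (n+2) 0 =
        -((a (n+1) : ℂ) * F (n+1) 0 + (b n : ℂ) * F n 0) := by
      linear_combination -h
    calc b (n+1) * ‖F (n+2) 0‖
        = ‖(b (n+1) : ℂ) * F (n+2) 0‖ := by
          rw [norm_mul, Complex.norm_real, Real.norm_eq_abs, abs_of_pos (hb (n+1))]
      _ = ‖(a (n+1) : ℂ) * F (n+1) 0 + (b n : ℂ) * F n 0‖ := by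
          rw [h2, norm_neg]
      _ ≤ ‖(a (n+1) : ℂ) * F (n+1) 0‖ + ‖(b n : ℂ) * F n 0‖ :=
          norm_add_le _ _
      _ = |a (n+1)| * ‖F (n+1) 0‖ + b n * ‖F n 0‖ := by
          rw [norm_mul, norm_mul, Complex.norm_real, Complex.norm_real, Real.norm_eq_abs, Real.norm_eq_abs, abs_of_pos (hb n)]
  refine ⟨h1, ?_, ?_⟩
  · exact berg_aux a b hb (fun n => ‖P n 0‖)
      (fun n => norm_nonneg _) (habs P hPrec) hαsum hreg h1
  · exact berg_aux a b hb (fun n => ‖Q n 0‖)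
      (fun n => norm_nonneg _) (habs Q hQrec) hαsum hreg h1
end

section
/- Let α : (r_0, ∞) → (0, ∞) be an order function with dual function β, and let (u_n)_{n≥1} be positive real numbers with u_n → 0 and u_n < 1/r_0 for all n ≥ n_0. For r > 0 set N_r = #{n ≥ 1 : u_n ≥ 1/r}. Then: (a) if ∑_{n≥n_0} β(u_n) < ∞, then N_r = O(α(r)) as r → ∞; (b) if N_r = O(α(r)) as r → ∞, then ∑_{n≥n_0} β(u_n)^{1+ε} < ∞ for every ε > 0. -/
/-- An order function: a continuous, positive, increasing function `α` on `(r0, ∞)` tending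
to `∞`, such that `r / α(r)` is also increasing and tends to `∞`. -/
def IsOrderFunction (r0 : ℝ) (α : ℝ → ℝ) : Prop :=
  0 ≤ r0 ∧ ContinuousOn α (Set.Ioi r0) ∧ (∀ r ∈ Set.Ioi r0, 0 < α r) ∧
    StrictMonoOn α (Set.Ioi r0) ∧ Filter.Tendsto α Filter.atTop Filter.atTop ∧
    StrictMonoOn (fun r => r / α r) (Set.Ioi r0) ∧
    Filter.Tendsto (fun r => r / α r) Filter.atTop Filter.atTop

/-- Berg–Szwarc, Lemma 4.7: for an order function `α` with dual `β` and positive `u_n → 0`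
with `u_n < 1/r0` eventually, setting `N_r = #{n : u_n ≥ 1/r}`:
(a) `∑ β(u_n) < ∞` implies `N_r = O(α(r))`;
(b) `N_r = O(α(r))` implies `∑ β(u_n)^{1+ε} < ∞` for every `ε > 0`. -/
theorem stmt_9 (r0 : ℝ) (α : ℝ → ℝ) (hα : IsOrderFunction r0 α)
    (u : ℕ → ℝ) (hu : ∀ n, 0 < u n)
    (hu0 : Filter.Tendsto u Filter.atTop (nhds 0))
    (n0 : ℕ) (hdom : ∀ n ≥ n0, r0 < (u n)⁻¹) :
    (Summable (fun n => (α (u n)⁻¹)⁻¹) →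
      ∃ C R : ℝ, 0 < C ∧ ∀ r : ℝ, R ≤ r →
        (Nat.card {n : ℕ | r⁻¹ ≤ u n} : ℝ) ≤ C * α r) ∧
    ((∃ C R : ℝ, 0 < C ∧ ∀ r : ℝ, R ≤ r →
        (Nat.card {n : ℕ | r⁻¹ ≤ u n} : ℝ) ≤ C * α r) →
      ∀ ε : ℝ, 0 < ε → Summable (fun n => ((α (u n)⁻¹)⁻¹) ^ (1 + ε))) := by
  obtain ⟨hr0, hcont, hpos, hmono, htop, -, -⟩ := hα
  have hfin : ∀ r : ℝ, 0 < r → ({n : ℕ | r⁻¹ ≤ u n} : Set ℕ).Finite := by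
    intro r hr
    obtain ⟨N, hN⟩ := Filter.eventually_atTop.mp
      (hu0.eventually (gt_mem_nhds (by positivity : (0:ℝ) < r⁻¹)))
    refine (Set.finite_Iio N).subset (fun n hn => ?_)
    by_contra h
    exact absurd hn (not_le.mpr (hN n (not_lt.mp h)))
  constructor
  · -- part (a)
    intro hsum
    set f : ℕ → ℝ := fun n => (α (u n)⁻¹)⁻¹ with hf
    set f' : ℕ → ℝ := Set.indicator {n : ℕ | n0 ≤ n} f with hf'
    have hsum' : Summable f' := hsum.indicator _
    have hf'nn : ∀ n, 0 ≤ f' n := by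
      intro n
      by_cases h : n ∈ {n : ℕ | n0 ≤ n}
      · rw [hf', Set.indicator_of_mem h]
        exact inv_nonneg.mpr (hpos _ (hdom n h)).le
      · rw [hf', Set.indicator_of_notMem h]
    set S := ∑' n, f' n with hS
    have hS0 : 0 ≤ S := tsum_nonneg hf'nn
    obtain ⟨R0, hR0⟩ := Filter.eventually_atTop.mp (htop.eventually_ge_atTop 1)
    have hn0c : (0:ℝ) ≤ (n0 : ℝ) := Nat.cast_nonneg n0
    refine ⟨(n0 : ℝ) + S + 1, max R0 (r0 + 1), by linarith, ?_⟩
    intro r hr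
    have hrr0 : r0 < r := by
      have := le_trans (le_max_right R0 (r0 + 1)) hr
      linarith
    have hr1 : (1:ℝ) ≤ α r := hR0 r (le_trans (le_max_left _ _) hr)
    have hrpos : 0 < r := lt_of_le_of_lt hr0 hrr0
    have hfinr := hfin r hrpos
    set F := hfinr.toFinset with hFdef
    set T := F.filter (fun n => n0 ≤ n) with hT
    have hcard : (Nat.card {n : ℕ | r⁻¹ ≤ u n}) = F.card := by
      rw [Nat.card_coe_set_eq, Set.ncard_eq_toFinset_card _ hfinr]
    have hFT : F.card ≤ n0 + T.card := by
      have hsub : F ⊆ Finset.range n0 ∪ T := by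
        intro n hn
        rcases lt_or_ge n n0 with h | h
        · exact Finset.mem_union_left _ (Finset.mem_range.mpr h)
        · exact Finset.mem_union_right _ (Finset.mem_filter.mpr ⟨hn, h⟩)
      calc F.card ≤ (Finset.range n0 ∪ T).card := Finset.card_le_card hsub
        _ ≤ n0 + T.card := by
            simpa using Finset.card_union_le (Finset.range n0) T
    have hαpos : 0 < α r := hpos r hrr0
    have hterm : ∀ n ∈ T, (α r)⁻¹ ≤ f' n := by
      intro n hn
      obtain ⟨hnF, hn0⟩ := Finset.mem_filter.mp hn
      have hnS : r⁻¹ ≤ u n := hfinr.mem_toFinset.mp hnF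
      have hun : (u n)⁻¹ ≤ r := by
        have := inv_anti₀ (by positivity : (0:ℝ) < r⁻¹) hnS
        rwa [inv_inv] at this
      have hle : α (u n)⁻¹ ≤ α r :=
        hmono.monotoneOn (Set.mem_Ioi.mpr (hdom n hn0)) (Set.mem_Ioi.mpr hrr0) hun
      rw [hf', Set.indicator_of_mem (Set.mem_setOf.mpr hn0) f]
      exact inv_anti₀ (hpos _ (hdom n hn0)) hle
    have hsumT : (T.card : ℝ) * (α r)⁻¹ ≤ S := by
      calc (T.card : ℝ) * (α r)⁻¹ = ∑ _n ∈ T, (α r)⁻¹ := by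
            rw [Finset.sum_const, nsmul_eq_mul]
        _ ≤ ∑ n ∈ T, f' n := Finset.sum_le_sum hterm
        _ ≤ S := Summable.sum_le_tsum T (fun i _ => hf'nn i) hsum'
    have hTcard : (T.card : ℝ) ≤ S * α r := by
      have := mul_le_mul_of_nonneg_right hsumT hαpos.le
      rwa [mul_assoc, inv_mul_cancel₀ hαpos.ne', mul_one] at this
    calc (Nat.card {n : ℕ | r⁻¹ ≤ u n} : ℝ) = (F.card : ℝ) := by rw [hcard]
      _ ≤ (n0 : ℝ) + (T.card : ℝ) := by exact_mod_cast hFT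
      _ ≤ (n0 : ℝ) * α r + S * α r := by
          have : (n0 : ℝ) ≤ (n0 : ℝ) * α r := le_mul_of_one_le_right hn0c hr1
          linarith
      _ ≤ ((n0 : ℝ) + S + 1) * α r := by nlinarith
  · -- part (b)
    rintro ⟨C, R, hC, hCR⟩ ε hε
    set R' := max R (r0 + 1) with hR'
    have hR'r0 : r0 < R' := lt_of_lt_of_le (by linarith) (le_max_right R (r0 + 1))
    set T0 := α R' with hT0
    -- inverse of α via IVT
    have key : ∀ t : ℝ, T0 ≤ t → ∃ r : ℝ, R ≤ r ∧ r0 < r ∧ α r = t := by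
      intro t ht
      obtain ⟨r1, hr1⟩ := Filter.eventually_atTop.mp (htop.eventually_ge_atTop t)
      set r2 := max r1 R' with hr2def
      have hr2 : R' ≤ r2 := le_max_right _ _
      have hcI : ContinuousOn α (Set.Icc R' r2) :=
        hcont.mono (fun x hx => lt_of_lt_of_le hR'r0 hx.1)
      have htmem : t ∈ Set.Icc (α R') (α r2) := ⟨ht, hr1 r2 (le_max_left _ _)⟩
      obtain ⟨r, hrmem, hrt⟩ := intermediate_value_Icc hr2 hcI htmem
      exact ⟨r, le_trans (le_max_left R (r0 + 1)) hrmem.1,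
        lt_of_lt_of_le hR'r0 hrmem.1, hrt⟩
    have hcount : ∀ t : ℝ, T0 ≤ t → ∃ r : ℝ, 0 < r ∧
        (Nat.card {n : ℕ | r⁻¹ ≤ u n} : ℝ) ≤ C * t ∧
        ∀ n, n0 ≤ n → α (u n)⁻¹ ≤ t → r⁻¹ ≤ u n := by
      intro t ht
      obtain ⟨r, hRr, hr0r, hαr⟩ := key t ht
      refine ⟨r, lt_of_le_of_lt hr0 hr0r, by rw [← hαr]; exact hCR r hRr, ?_⟩
      intro n hn hle
      have hun : (u n)⁻¹ ≤ r := by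
        by_contra h
        have := hmono (Set.mem_Ioi.mpr hr0r) (Set.mem_Ioi.mpr (hdom n hn)) (not_le.mp h)
        rw [hαr] at this
        exact absurd hle (not_le.mpr this)
      have := inv_anti₀ (lt_of_le_of_lt hr0 (hdom n hn)) hun
      rwa [inv_inv] at this
    -- geometric ratio
    set q : ℝ := (2:ℝ)⁻¹ ^ ε with hq
    have hq0 : 0 < q := Real.rpow_pos_of_pos (by norm_num) _
    have hq1 : q < 1 := Real.rpow_lt_one (by norm_num) (by norm_num) hε
    -- choose K with T0 ≤ 2^K
    obtain ⟨K, hK⟩ : ∃ K : ℕ, T0 ≤ (2:ℝ) ^ K := by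
      obtain ⟨K, hK⟩ := exists_nat_ge T0
      refine ⟨K, hK.trans ?_⟩
      exact_mod_cast Nat.cast_le.mpr (Nat.lt_two_pow_self (n := K)).le
    -- choose n1
    have hv0 : Filter.Tendsto (fun n => α (u n)⁻¹) Filter.atTop Filter.atTop := by
      refine htop.comp (Filter.Tendsto.comp tendsto_inv_nhdsGT_zero ?_)
      exact tendsto_nhdsWithin_of_tendsto_nhds_of_eventually_within _ hu0
        (Filter.Eventually.of_forall (fun n => hu n))
    obtain ⟨n1', hn1'⟩ := Filter.eventually_atTop.mp (hv0.eventually_gt_atTop ((2:ℝ) ^ K))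
    set n1 := max n1' n0 with hn1def
    set g : ℕ → ℝ := fun m => (α (u (m + n1))⁻¹)⁻¹ with hg
    have hmn0 : ∀ m : ℕ, n0 ≤ m + n1 := fun m =>
      le_trans (le_max_right n1' n0) (Nat.le_add_left n1 m)
    have hgpos : ∀ m, 0 < g m := fun m => inv_pos.mpr (hpos _ (hdom _ (hmn0 m)))
    have hαbig : ∀ m : ℕ, (2:ℝ) ^ K < α (u (m + n1))⁻¹ := fun m =>
      hn1' (m + n1) (le_trans (le_max_left n1' n0) (Nat.le_add_left n1 m))
    have hglt : ∀ m, g m < (2:ℝ)⁻¹ ^ K := by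
      intro m
      rw [hg]
      have h2K : (0:ℝ) < (2:ℝ) ^ K := by positivity
      have := inv_strictAnti₀ h2K (hαbig m)
      rwa [← inv_pow] at this
    -- dyadic level of each term
    have hex : ∀ m : ℕ, ∃ y : ℕ, (2:ℝ)⁻¹ ^ (y + 1) ≤ g m := by
      intro m
      obtain ⟨n, hn⟩ := exists_pow_lt_of_lt_one (hgpos m) (by norm_num : (2:ℝ)⁻¹ < 1)
      exact ⟨n, le_of_lt (lt_of_le_of_lt
        (pow_le_pow_of_le_one (by norm_num) (by norm_num) (Nat.le_succ n)) hn)⟩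
    set km : ℕ → ℕ := fun m => Nat.find (hex m) with hkm
    have hk1 : ∀ m, (2:ℝ)⁻¹ ^ (km m + 1) ≤ g m := fun m => Nat.find_spec (hex m)
    have hk2 : ∀ m, g m < (2:ℝ)⁻¹ ^ (km m) := by
      intro m
      rcases Nat.eq_zero_or_pos (km m) with h | h
      · rw [h, pow_zero]
        exact lt_of_lt_of_le (hglt m) (pow_le_one₀ (by norm_num) (by norm_num))
      · obtain ⟨j, hj⟩ := Nat.exists_eq_add_of_lt h
        rw [zero_add] at hj
        have := Nat.find_min (hex m) (show j < km m by omega)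
        rw [← hj] at this
        exact not_le.mp this
    have hkK : ∀ m, K ≤ km m := by
      intro m
      by_contra h
      have hlt : km m + 1 ≤ K := not_le.mp h
      have : (2:ℝ)⁻¹ ^ K ≤ (2:ℝ)⁻¹ ^ (km m + 1) :=
        pow_le_pow_of_le_one (by norm_num) (by norm_num) hlt
      exact absurd (lt_of_le_of_lt (this.trans (hk1 m)) (hglt m)) (lt_irrefl _)
    -- per-term power identity
    have hpow : ∀ y : ℕ, ((2:ℝ)⁻¹ ^ y) ^ (1 + ε) = (2:ℝ)⁻¹ ^ y * q ^ y := by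
      intro y
      have h1 : ((2:ℝ)⁻¹ ^ y) ^ (1 + ε) = (2:ℝ)⁻¹ ^ ((y:ℝ) * (1 + ε)) := by
        rw [← Real.rpow_natCast (2:ℝ)⁻¹ y, ← Real.rpow_mul (by norm_num)]
      have h2 : q ^ y = (2:ℝ)⁻¹ ^ (ε * (y:ℝ)) := by
        rw [hq, ← Real.rpow_natCast ((2:ℝ)⁻¹ ^ ε) y, ← Real.rpow_mul (by norm_num)]
      have h3 : (2:ℝ)⁻¹ ^ y = (2:ℝ)⁻¹ ^ ((y:ℝ)) := (Real.rpow_natCast _ y).symm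
      rw [h1, h2]
      rw [h3]
      rw [← Real.rpow_add (by norm_num : (0:ℝ) < (2:ℝ)⁻¹)]
      congr 1
      ring
    -- summability
    rw [← summable_nat_add_iff n1]
    have hgnn : ∀ m, 0 ≤ g m ^ (1 + ε) := fun m => Real.rpow_nonneg (hgpos m).le _
    apply summable_of_sum_range_le (c := 2 * C * (1 - q)⁻¹) hgnn
    intro N
    set s := Finset.range N with hs
    set t := s.image km with ht
    rw [← Finset.sum_fiberwise_of_maps_to (g := km)
      (fun m hm => Finset.mem_image_of_mem km hm) (fun m => g m ^ (1 + ε))]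
    have hinner : ∀ y ∈ t, ∑ m ∈ s.filter (fun m => km m = y), g m ^ (1 + ε)
        ≤ 2 * C * q ^ y := by
      intro y hy
      obtain ⟨m0, _hm0s, hm0⟩ := Finset.mem_image.mp hy
      have hKy : K ≤ y := hm0 ▸ hkK m0
      have htT0 : T0 ≤ (2:ℝ) ^ (y + 1) :=
        hK.trans (pow_le_pow_right₀ (by norm_num) (by omega))
      obtain ⟨r, hrpos, hrcard, hrcrit⟩ := hcount _ htT0
      have hfinr := hfin r hrpos
      have hcardb : ((s.filter (fun m => km m = y)).card : ℝ) ≤ C * 2 ^ (y + 1) := by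
        have hsub : (s.filter (fun m => km m = y)).image (· + n1) ⊆ hfinr.toFinset := by
          intro i hi
          obtain ⟨m, hm, rfl⟩ := Finset.mem_image.mp hi
          obtain ⟨-, hkmy⟩ := Finset.mem_filter.mp hm
          refine hfinr.mem_toFinset.mpr ?_
          refine hrcrit (m + n1) (hmn0 m) ?_
          -- α (u (m+n1))⁻¹ ≤ 2 ^ (y+1)
          have h1 : (2:ℝ)⁻¹ ^ (y + 1) ≤ g m := hkmy ▸ hk1 m
          have h2 := inv_anti₀ (by positivity : (0:ℝ) < (2:ℝ)⁻¹ ^ (y + 1)) h1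
          rwa [hg, inv_inv, ← inv_pow, inv_inv] at h2
        have hinj : ((s.filter (fun m => km m = y)).image (· + n1)).card
            = (s.filter (fun m => km m = y)).card :=
          Finset.card_image_of_injective _ (add_left_injective n1)
        have hle1 : (s.filter (fun m => km m = y)).card ≤ hfinr.toFinset.card := by
          rw [← hinj]; exact Finset.card_le_card hsub
        have hle2 : (hfinr.toFinset.card : ℝ) ≤ C * 2 ^ (y + 1) := by
          rw [← Set.ncard_eq_toFinset_card _ hfinr, ← Nat.card_coe_set_eq]
          exact hrcard
        exact le_trans (by exact_mod_cast hle1) hle2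
      calc ∑ m ∈ s.filter (fun m => km m = y), g m ^ (1 + ε)
          ≤ ∑ _m ∈ s.filter (fun m => km m = y), (2:ℝ)⁻¹ ^ y * q ^ y := by
            refine Finset.sum_le_sum (fun m hm => ?_)
            obtain ⟨-, hkmy⟩ := Finset.mem_filter.mp hm
            rw [← hpow]
            refine Real.rpow_le_rpow (hgpos m).le ?_ (by linarith)
            rw [← hkmy]
            exact (hk2 m).le
        _ = ((s.filter (fun m => km m = y)).card : ℝ) * ((2:ℝ)⁻¹ ^ y * q ^ y) := by
            rw [Finset.sum_const, nsmul_eq_mul]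
        _ ≤ (C * 2 ^ (y + 1)) * ((2:ℝ)⁻¹ ^ y * q ^ y) :=
            mul_le_mul_of_nonneg_right hcardb (by positivity)
        _ = 2 * C * q ^ y := by
            rw [pow_succ, inv_pow]
            field_simp
    calc ∑ y ∈ t, ∑ m ∈ s.filter (fun m => km m = y), g m ^ (1 + ε)
        ≤ ∑ y ∈ t, 2 * C * q ^ y := Finset.sum_le_sum hinner
      _ = 2 * C * ∑ y ∈ t, q ^ y := by rw [Finset.mul_sum]
      _ ≤ 2 * C * (1 - q)⁻¹ := by
          refine mul_le_mul_of_nonneg_left ?_ (by linarith)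
          rw [← tsum_geometric_of_lt_one hq0.le hq1]
          exact Summable.sum_le_tsum t (fun i _ => pow_nonneg hq0.le i)
            (summable_geometric_of_lt_one hq0.le hq1)
end

section
/- Let α : (r_0, ∞) → (0, ∞) be an order function with dual function β, and let (u_n)_{n≥1} be positive real numbers with u_n → 0, u_n < 1/r_0 for all n ≥ n_0, and ∑_{n≥n_0} β(u_n) < ∞. Then log ∏_{n=1}^∞ (1 + r·u_n) = O(α(r)·log r) as r → ∞; in particular the entire function f(z) = ∏_{n=1}^∞ (1 + z·u_n) has order bounded by α, i.e. there exists K > 0 with M_f(r) ≤ r^{K·α(r)} for all sufficiently large r. -/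
set_option maxHeartbeats 1000000 in
/-- Berg–Szwarc, Proposition 4.9: for an order function `α` with dual `β` and positive
`u_n → 0` with `u_n < 1/r0` eventually and `∑ β(u_n) < ∞`, one has
`log ∏ (1 + r·u_n) = O(α(r)·log r)`; in particular the entire function
`f(z) = ∏ (1 + z·u_n)` has order bounded by `α`. -/
theorem stmt_10 (r0 : ℝ) (α : ℝ → ℝ) (hα : IsOrderFunction r0 α)
    (u : ℕ → ℝ) (hu : ∀ n, 0 < u n)
    (hu0 : Filter.Tendsto u Filter.atTop (nhds 0))
    (n0 : ℕ) (hdom : ∀ n ≥ n0, r0 < (u n)⁻¹)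
    (hβ : Summable (fun n => (α (u n)⁻¹)⁻¹)) :
    (∃ C : ℝ, 0 < C ∧ ∀ᶠ r : ℝ in Filter.atTop,
      Real.log (∏' n : ℕ, (1 + r * u n)) ≤ C * (α r * Real.log r)) ∧
    (∃ K : ℝ, 0 < K ∧ ∀ᶠ r : ℝ in Filter.atTop,
      sSup ((fun z : ℂ => ‖∏' n : ℕ, (1 + z * (u n : ℂ))‖) ''
          Metric.closedBall (0 : ℂ) r) ≤ r ^ (K * α r)) := by
  obtain ⟨hr00, -, hαpos, hαmono, hαtop, hqmono, hqtop⟩ := hα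
  set β : ℕ → ℝ := fun n => (α (u n)⁻¹)⁻¹ with hβdef
  set r1 : ℝ := max r0 1 + 1 with hr1def
  have hr1r0 : r0 < r1 := lt_of_le_of_lt (le_max_left _ _) (lt_add_one _)
  have hr11 : 1 < r1 := lt_of_le_of_lt (le_max_right _ _) (lt_add_one _)
  have hr1pos : 0 < r1 := lt_trans one_pos hr11
  have hαr1 : 0 < α r1 := hαpos r1 hr1r0
  obtain ⟨N, hN⟩ : ∃ N, ∀ n ≥ N, u n < r1⁻¹ :=
    Filter.eventually_atTop.mp (hu0.eventually (gt_mem_nhds (by positivity)))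
  have hinv : ∀ n, N ≤ n → r1 < (u n)⁻¹ := by
    intro n hn
    have h := inv_strictAnti₀ (hu n) (hN n hn)
    rwa [inv_inv] at h
  have hmemu : ∀ n, N ≤ n → (u n)⁻¹ ∈ Set.Ioi r0 := fun n hn =>
    Set.mem_Ioi.mpr (lt_trans hr1r0 (hinv n hn))
  have hβpos : ∀ n, N ≤ n → 0 < β n := fun n hn => inv_pos.mpr (hαpos _ (hmemu n hn))
  have hub : ∀ n, N ≤ n → u n ≤ (α r1 / r1) * β n := by
    intro n hn
    have haun : 0 < α (u n)⁻¹ := hαpos _ (hmemu n hn)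
    have hq : r1 / α r1 ≤ (u n)⁻¹ / α (u n)⁻¹ :=
      (hqmono (Set.mem_Ioi.mpr hr1r0) (hmemu n hn) (hinv n hn)).le
    rw [div_le_div_iff₀ hαr1 haun] at hq
    have h2 := mul_le_mul_of_nonneg_left hq (hu n).le
    rw [← mul_assoc, ← mul_assoc, mul_inv_cancel₀ (hu n).ne', one_mul] at h2
    -- h2 : u n * r1 * α (u n)⁻¹ ≤ α r1
    rw [hβdef]
    rw [show (α r1 / r1) * (α (u n)⁻¹)⁻¹ = α r1 / (r1 * α (u n)⁻¹) by
      field_simp]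
    rw [le_div_iff₀ (by positivity)]
    nlinarith
  have hβtail : Summable (fun n => β (n + N)) := (summable_nat_add_iff N).mpr hβ
  have hsu : Summable u := by
    rw [← summable_nat_add_iff N]
    exact Summable.of_nonneg_of_le (fun n => (hu _).le)
      (fun n => hub (n + N) (Nat.le_add_left N n)) (hβtail.mul_left (α r1 / r1))
  have hfpos : ∀ (r : ℝ), 0 ≤ r → ∀ n, 0 < 1 + r * u n := by
    intro r hr n
    have := (hu n).le
    nlinarith
  have hlog_nonneg : ∀ (r : ℝ), 0 ≤ r → ∀ n, 0 ≤ Real.log (1 + r * u n) := by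
    intro r hr n
    apply Real.log_nonneg
    nlinarith [(hu n).le]
  have hlogsum : ∀ (r : ℝ), 0 ≤ r → Summable (fun n => Real.log (1 + r * u n)) := by
    intro r hr
    apply Summable.of_nonneg_of_le (hlog_nonneg r hr) (fun n => ?_) (hsu.mul_left r)
    calc Real.log (1 + r * u n) ≤ (1 + r * u n) - 1 :=
          Real.log_le_sub_one_of_pos (hfpos r hr n)
    _ = r * u n := by ring
  have hprod : ∀ (r : ℝ), 0 ≤ r →
      (∏' n : ℕ, (1 + r * u n)) = Real.exp (∑' n : ℕ, Real.log (1 + r * u n)) := by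
    intro r hr
    have h := Real.rexp_tsum_eq_tprod (f := fun n => 1 + r * u n)
      (fun n => hfpos r hr n) (hlogsum r hr)
    exact h.symm
  set S : ℝ := ∑' n, β (n + N) with hSdef
  have hSnonneg : 0 ≤ S := tsum_nonneg (fun n => (hβpos _ (Nat.le_add_left N n)).le)
  set U : ℝ := 1 + ∑ i ∈ Finset.range N, u i with hUdef
  have hU1 : 1 ≤ U := le_add_of_nonneg_right (Finset.sum_nonneg fun i _ => (hu i).le)
  have hUn : ∀ n, n < N → u n ≤ U := by
    intro n hn
    have h := Finset.single_le_sum (fun i (_ : i ∈ Finset.range N) => (hu i).le)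
      (Finset.mem_range.mpr hn)
    linarith
  have main : ∀ (r : ℝ), r1 < r → 3 ≤ r → U ≤ r → 1 ≤ α r →
      (∑' n : ℕ, Real.log (1 + r * u n)) ≤ (3 * N + 3 * S) * (α r * Real.log r) := by
    intro r hrr1 hr3 hrU hαr
    have hr0r : r ∈ Set.Ioi r0 := Set.mem_Ioi.mpr (lt_trans hr1r0 hrr1)
    have hrpos : 0 < r := by linarith
    have hαrpos : 0 < α r := by linarith
    have hexp1 : Real.exp 1 ≤ r := by
      have := Real.exp_one_lt_d9
      linarith
    have hlogr1 : 1 ≤ Real.log r := by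
      calc (1:ℝ) = Real.log (Real.exp 1) := (Real.log_exp 1).symm
      _ ≤ Real.log r := Real.log_le_log (Real.exp_pos 1) hexp1
    have hlog2r : Real.log 2 ≤ Real.log r := Real.log_le_log two_pos (by linarith)
    have hterm : ∀ n, N ≤ n → Real.log (1 + r * u n) ≤ 3 * (α r * Real.log r) * β n := by
      intro n hn
      have hun := hu n
      have huninv := hinv n hn
      have hmem := hmemu n hn
      have haun : 0 < α (u n)⁻¹ := hαpos _ hmem
      have hβn : 0 < β n := inv_pos.mpr haun
      rcases le_or_gt (u n)⁻¹ r with hle | hlt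
      · -- big u n : u n ≥ 1/r
        have hr_un : 1 ≤ r * u n := by
          calc (1:ℝ) = (u n)⁻¹ * u n := (inv_mul_cancel₀ hun.ne').symm
          _ ≤ r * u n := mul_le_mul_of_nonneg_right hle hun.le
        have hun1 : u n ≤ 1 := by
          have h1 : r1⁻¹ ≤ 1 := by
            rw [inv_le_one_iff₀]
            right; linarith
          linarith [hN n hn]
        have h2 : Real.log (1 + r * u n) ≤ Real.log (2 * r) := by
          apply Real.log_le_log (hfpos r hrpos.le n)
          nlinarith
        have h3 : Real.log (2 * r) ≤ 2 * Real.log r := by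
          rw [Real.log_mul two_ne_zero hrpos.ne']
          linarith
        have hαineq : α (u n)⁻¹ ≤ α r := hαmono.monotoneOn hmem hr0r hle
        have hβge : (α r)⁻¹ ≤ β n := by
          rw [hβdef]
          exact inv_anti₀ haun hαineq
        have h4 : 1 ≤ α r * β n := by
          have := mul_le_mul_of_nonneg_left hβge hαrpos.le
          rwa [mul_inv_cancel₀ hαrpos.ne'] at this
        have hlrnn : 0 ≤ Real.log r := by linarith
        nlinarith [mul_le_mul_of_nonneg_left h4 hlrnn]
      · -- small u n : u n < 1/r
        have hq : r / α r ≤ (u n)⁻¹ / α (u n)⁻¹ := (hqmono hr0r hmem hlt).le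
        rw [div_le_div_iff₀ hαrpos haun] at hq
        -- hq : r * α (u n)⁻¹ ≤ (u n)⁻¹ * α r
        have h2 := mul_le_mul_of_nonneg_left hq hun.le
        rw [← mul_assoc, ← mul_assoc, mul_inv_cancel₀ hun.ne', one_mul] at h2
        -- h2 : u n * r * α (u n)⁻¹ ≤ α r
        have hrun : r * u n ≤ α r * β n := by
          rw [hβdef]
          rw [show α r * (α (u n)⁻¹)⁻¹ = α r / α (u n)⁻¹ from (div_eq_mul_inv _ _).symm]
          rw [le_div_iff₀ haun]
          nlinarith
        have hlog : Real.log (1 + r * u n) ≤ r * u n := by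
          calc Real.log (1 + r * u n) ≤ (1 + r * u n) - 1 :=
                Real.log_le_sub_one_of_pos (hfpos r hrpos.le n)
          _ = r * u n := by ring
        have h9 : 0 ≤ α r * β n * (3 * Real.log r - 1) :=
          mul_nonneg (mul_nonneg hαrpos.le hβn.le) (by linarith)
        nlinarith [h9]
    have htail : (∑' n : ℕ, Real.log (1 + r * u (n + N))) ≤ 3 * (α r * Real.log r) * S := by
      have h := Summable.tsum_le_tsum (f := fun n => Real.log (1 + r * u (n + N)))
        (g := fun n => 3 * (α r * Real.log r) * β (n + N))
        (fun n => hterm (n + N) (Nat.le_add_left N n))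
        ((summable_nat_add_iff N).mpr (hlogsum r hrpos.le))
        (hβtail.mul_left _)
      calc (∑' n : ℕ, Real.log (1 + r * u (n + N)))
          ≤ ∑' n : ℕ, 3 * (α r * Real.log r) * β (n + N) := h
      _ = 3 * (α r * Real.log r) * S := tsum_mul_left
    have hhead : (∑ i ∈ Finset.range N, Real.log (1 + r * u i)) ≤ 3 * N * Real.log r := by
      have hb : ∀ i ∈ Finset.range N, Real.log (1 + r * u i) ≤ 3 * Real.log r := by
        intro i hi
        have hui := hUn i (Finset.mem_range.mp hi)
        have h1 : Real.log (1 + r * u i) ≤ Real.log (2 * r * U) := by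
          apply Real.log_le_log (hfpos r hrpos.le i)
          nlinarith [hu i, (hu i).le]
        rw [Real.log_mul (by positivity) (by positivity),
          Real.log_mul two_ne_zero hrpos.ne'] at h1
        have lU : Real.log U ≤ Real.log r := Real.log_le_log (by linarith) hrU
        linarith
      calc (∑ i ∈ Finset.range N, Real.log (1 + r * u i))
          ≤ ∑ i ∈ Finset.range N, 3 * Real.log r := Finset.sum_le_sum hb
      _ = N * (3 * Real.log r) := by
          rw [Finset.sum_const, Finset.card_range, nsmul_eq_mul]
      _ = 3 * N * Real.log r := by ring
    rw [← Summable.sum_add_tsum_nat_add N (hlogsum r hrpos.le)]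
    have hNn : (0:ℝ) ≤ N := Nat.cast_nonneg N
    nlinarith [mul_nonneg hNn (sub_nonneg.mpr hlogr1), mul_nonneg hαrpos.le (by linarith : (0:ℝ) ≤ Real.log r)]
  -- conclusion
  have hCpos : (0:ℝ) < 3 * N + 3 * S + 1 := by
    have : (0:ℝ) ≤ N := Nat.cast_nonneg N
    linarith
  have hev : ∀ᶠ r : ℝ in Filter.atTop, r1 < r ∧ 3 ≤ r ∧ U ≤ r ∧ 1 ≤ α r := by
    filter_upwards [Filter.eventually_gt_atTop r1, Filter.eventually_ge_atTop 3,
      Filter.eventually_ge_atTop U, hαtop.eventually_ge_atTop 1] with r h1 h2 h3 h4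
    exact ⟨h1, h2, h3, h4⟩
  constructor
  · refine ⟨3 * N + 3 * S + 1, hCpos, ?_⟩
    filter_upwards [hev] with r ⟨h1, h2, h3, h4⟩
    have hrpos : (0:ℝ) < r := by linarith
    rw [hprod r hrpos.le, Real.log_exp]
    have hm := main r h1 h2 h3 h4
    have hlr : 0 ≤ Real.log r := Real.log_nonneg (by linarith)
    have hnn : 0 ≤ α r * Real.log r := mul_nonneg (by linarith) hlr
    nlinarith
  · refine ⟨3 * N + 3 * S + 1, hCpos, ?_⟩
    filter_upwards [hev] with r ⟨h1, h2, h3, h4⟩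
    have hrpos : (0:ℝ) < r := by linarith
    have hlr : 0 ≤ Real.log r := Real.log_nonneg (by linarith)
    have hnn : 0 ≤ α r * Real.log r := mul_nonneg (by linarith) hlr
    have hbound : (∏' n : ℕ, (1 + r * u n)) ≤ r ^ ((3 * N + 3 * S + 1) * α r) := by
      rw [hprod r hrpos.le, Real.rpow_def_of_pos hrpos]
      apply Real.exp_le_exp.mpr
      have hm := main r h1 h2 h3 h4
      nlinarith
    apply Real.sSup_le
    · rintro x ⟨z, hz, rfl⟩
      have hzr : ‖z‖ ≤ r := by
        simpa [Metric.mem_closedBall, Complex.dist_eq] using hz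
      have key : ‖∏' n : ℕ, (1 + z * (u n : ℂ))‖ ≤ ∏' n : ℕ, (1 + r * u n) := by
        by_cases hzero : ∀ n, (1 : ℂ) + z * (u n : ℂ) ≠ 0
        · -- all factors nonzero
          obtain ⟨M, hM⟩ : ∃ M, ∀ n ≥ M, u n < (2 * r)⁻¹ :=
            Filter.eventually_atTop.mp (hu0.eventually (gt_mem_nhds (by positivity)))
          have hsummC : Summable (fun n => Complex.log (1 + z * (u n : ℂ))) := by
            rw [← summable_nat_add_iff M]
            apply Summable.of_norm
            apply Summable.of_nonneg_of_le (fun n => norm_nonneg _) (fun n => ?_)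
              (((summable_nat_add_iff M).mpr hsu).mul_left (3 / 2 * r))
            have hnorm : ‖z * (u (n + M) : ℂ)‖ ≤ r * u (n + M) := by
              rw [norm_mul, Complex.norm_real, Real.norm_of_nonneg (hu _).le]
              exact mul_le_mul_of_nonneg_right hzr (hu _).le
            have hhalf : ‖z * (u (n + M) : ℂ)‖ ≤ 1 / 2 := by
              have h5 := hM (n + M) (Nat.le_add_left M n)
              have h6 : r * u (n + M) ≤ r * (2 * r)⁻¹ :=
                mul_le_mul_of_nonneg_left h5.le hrpos.le
              have h7 : r * (2 * r)⁻¹ = 1 / 2 := by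
                field_simp
              linarith
            calc ‖Complex.log (1 + z * (u (n + M) : ℂ))‖
                ≤ 3 / 2 * ‖z * (u (n + M) : ℂ)‖ :=
                  Complex.norm_log_one_add_half_le_self hhalf
            _ ≤ 3 / 2 * (r * u (n + M)) := by nlinarith
            _ = 3 / 2 * r * u (n + M) := by ring
          have hmult : Multipliable (fun n => (1 : ℂ) + z * (u n : ℂ)) :=
            Complex.multipliable_of_summable_log (f := fun n => 1 + z * (u n : ℂ)) hsummC
          have habspos : ∀ n, 0 < ‖1 + z * (u n : ℂ)‖ :=
            fun n => norm_pos_iff.mpr (hzero n)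
          have hsumlogabs : Summable (fun n => Real.log ‖1 + z * (u n : ℂ)‖) := by
            have heq : (fun n => Real.log ‖1 + z * (u n : ℂ)‖)
                = fun n => (Complex.log (1 + z * (u n : ℂ))).re := by
              funext n
              rw [Complex.log_re]
            rw [heq]
            have hre := (hsummC.hasSum.mapL Complex.reCLM).summable
            simpa [Complex.reCLM_apply] using hre
          have h1' : ‖∏' n : ℕ, (1 + z * (u n : ℂ))‖
              = ∏' n : ℕ, ‖1 + z * (u n : ℂ)‖ := by
            have := Multipliable.norm_tprod hmult
            exact this
          have h2' : (∏' n : ℕ, ‖1 + z * (u n : ℂ)‖)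
              = Real.exp (∑' n : ℕ, Real.log ‖1 + z * (u n : ℂ)‖) := by
            have h := Real.rexp_tsum_eq_tprod
              (f := fun n => ‖1 + z * (u n : ℂ)‖)
              (fun n => habspos n) hsumlogabs
            exact h.symm
          have h3' : (∑' n : ℕ, Real.log ‖1 + z * (u n : ℂ)‖)
              ≤ ∑' n : ℕ, Real.log (1 + r * u n) := by
            apply Summable.tsum_le_tsum (fun n => ?_) hsumlogabs (hlogsum r hrpos.le)
            apply Real.log_le_log (habspos n)
            calc ‖1 + z * (u n : ℂ)‖
                ≤ ‖(1 : ℂ)‖ + ‖z * (u n : ℂ)‖ :=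
                  norm_add_le _ _
            _ = 1 + ‖z‖ * u n := by
                rw [norm_one, norm_mul, Complex.norm_real, Real.norm_of_nonneg (hu n).le]
            _ ≤ 1 + r * u n := by nlinarith [hu n, (hu n).le]
          rw [h1', h2', hprod r hrpos.le]
          exact Real.exp_le_exp.mpr h3'
        · -- some factor is zero
          push_neg at hzero
          obtain ⟨m, hm⟩ := hzero
          have h0 : (∏' n : ℕ, ((1 : ℂ) + z * (u n : ℂ))) = 0 := by
            have hP : HasProd (fun n => (1 : ℂ) + z * (u n : ℂ)) 0 := by
              apply Filter.Tendsto.congr' ?_ (tendsto_const_nhds (x := (0:ℂ)))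
              filter_upwards [Filter.eventually_ge_atTop ({m} : Finset ℕ)] with s hs
              exact (Finset.prod_eq_zero (hs (Finset.mem_singleton_self m)) hm).symm
            exact hP.tprod_eq
          rw [h0, norm_zero]
          rw [hprod r hrpos.le]
          exact (Real.exp_pos _).le
      have := hbound
      linarith
    · exact Real.rpow_nonneg hrpos.le _
end

section
/- Let α be an order function with dual function β, and consider an indeterminate moment problem. The following are equivalent: (i) ∑_n β(P_n(0)²) < ∞ and ∑_n β(Q_n(0)²) < ∞; (ii) for every z ∈ ℂ, ∑_n β(|P_n(z)|²) < ∞ and ∑_n β(|Q_n(z)|²) < ∞. If these conditions hold, then ∑_n β(1/b_n) < ∞ and P has order bounded by α, i.e. there exists K > 0 with M_P(r) ≤ r^{K·α(r)} for all sufficiently large r. -/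
/-- The dual function `β(r) = 1 / α(1/r)` of an order function `α`, with `β(0) = 0`. -/
noncomputable def dualFn (α : ℝ → ℝ) (t : ℝ) : ℝ :=
  if t = 0 then 0 else (α t⁻¹)⁻¹

/-- The maximum of `P(z) = (∑ |P_n(z)|²)^{1/2}` over the closed disk of radius `r`. -/
noncomputable def Pmax (P : ℕ → ℂ → ℂ) (r : ℝ) : ℝ :=
  sSup ((fun z : ℂ => Real.sqrt (∑' n : ℕ, ‖P n z‖ ^ 2)) '' Metric.closedBall (0 : ℂ) r)


open Finset in
private lemma green_aux (b a : ℕ → ℝ) (r s : ℕ → ℂ → ℂ) (γ δ : ℂ)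
    (hr0 : ∀ z : ℂ, z * r 0 z = (b 0 : ℂ) * r 1 z + (a 0 : ℂ) * r 0 z + γ)
    (hrrec : ∀ (n : ℕ) (z : ℂ), z * r (n+1) z =
      (b (n+1) : ℂ) * r (n+2) z + (a (n+1) : ℂ) * r (n+1) z + (b n : ℂ) * r n z)
    (hs0 : (0:ℂ) * s 0 0 = (b 0 : ℂ) * s 1 0 + (a 0 : ℂ) * s 0 0 + δ)
    (hsrec : ∀ n : ℕ, (0:ℂ) * s (n+1) 0 =
      (b (n+1) : ℂ) * s (n+2) 0 + (a (n+1) : ℂ) * s (n+1) 0 + (b n : ℂ) * s n 0) :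
    ∀ (n : ℕ) (z : ℂ), z * ∑ k ∈ range (n+1), r k z * s k 0 =
      (b n : ℂ) * (r (n+1) z * s n 0 - r n z * s (n+1) 0) + (γ * s 0 0 - δ * r 0 z) := by
  intro n z
  induction n with
  | zero =>
    simp only [zero_add, sum_range_one]
    linear_combination (s 0 0) * hr0 z - (r 0 z) * hs0
  | succ n ih =>
    rw [sum_range_succ, mul_add, ih]
    linear_combination (s (n+1) 0) * hrrec n z - (r (n+1) z) * hsrec n

open Finset in
private lemma key_formulas (a b : ℕ → ℝ)
    (P Q : ℕ → ℂ → ℂ)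
    (hP0 : ∀ z : ℂ, P 0 z = 1) (hQ0 : ∀ z : ℂ, Q 0 z = 0)
    (hPrec0 : ∀ z : ℂ, z * P 0 z = (b 0 : ℂ) * P 1 z + (a 0 : ℂ) * P 0 z)
    (hQrec0 : ∀ z : ℂ, z * Q 0 z = (b 0 : ℂ) * Q 1 z + (a 0 : ℂ) * Q 0 z - 1)
    (hPrec : ∀ (n : ℕ) (z : ℂ), z * P (n+1) z =
      (b (n+1) : ℂ) * P (n+2) z + (a (n+1) : ℂ) * P (n+1) z + (b n : ℂ) * P n z)
    (hQrec : ∀ (n : ℕ) (z : ℂ), z * Q (n+1) z =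
      (b (n+1) : ℂ) * Q (n+2) z + (a (n+1) : ℂ) * Q (n+1) z + (b n : ℂ) * Q n z) :
    (∀ n, (b n : ℂ) * (P (n+1) 0 * Q n 0 - P n 0 * Q (n+1) 0) = -1) ∧
    (∀ (n : ℕ) (z : ℂ), P (n+1) z = P (n+1) 0 +
      z * ∑ k ∈ range (n+1), (Q (n+1) 0 * P k 0 - P (n+1) 0 * Q k 0) * P k z) ∧
    (∀ (n : ℕ) (z : ℂ), Q (n+1) z = Q (n+1) 0 +
      z * ∑ k ∈ range (n+1), (Q (n+1) 0 * P k 0 - P (n+1) 0 * Q k 0) * Q k z) := by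
  have hP0' : ∀ z : ℂ, z * P 0 z = (b 0 : ℂ) * P 1 z + (a 0 : ℂ) * P 0 z + 0 := by
    intro z; rw [add_zero]; exact hPrec0 z
  have hQ0' : ∀ z : ℂ, z * Q 0 z = (b 0 : ℂ) * Q 1 z + (a 0 : ℂ) * Q 0 z + (-1) := by
    intro z; rw [← sub_eq_add_neg]; exact hQrec0 z
  have E1 := green_aux b a P P 0 0 hP0' hPrec (hP0' 0) (fun n => hPrec n 0)
  have E2 := green_aux b a P Q 0 (-1) hP0' hPrec (hQ0' 0) (fun n => hQrec n 0)
  have E3 := green_aux b a Q P (-1) 0 hQ0' hQrec (hP0' 0) (fun n => hPrec n 0)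
  have E4 := green_aux b a Q Q (-1) (-1) hQ0' hQrec (hQ0' 0) (fun n => hQrec n 0)
  have hW : ∀ n, (b n : ℂ) * (P (n+1) 0 * Q n 0 - P n 0 * Q (n+1) 0) = -1 := by
    intro n
    have := E2 n 0
    rw [hP0 0] at this
    linear_combination -this
  refine ⟨hW, ?_, ?_⟩
  · intro n z
    have h1 := E1 n z
    have h2 := E2 n z
    rw [hP0 z] at h2
    have hsplit : ∑ k ∈ range (n+1), (Q (n+1) 0 * P k 0 - P (n+1) 0 * Q k 0) * P k z =
        Q (n+1) 0 * ∑ k ∈ range (n+1), P k z * P k 0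
        - P (n+1) 0 * ∑ k ∈ range (n+1), P k z * Q k 0 := by
      rw [mul_sum, mul_sum, ← sum_sub_distrib]
      exact sum_congr rfl (fun k _ => by ring)
    rw [hsplit]
    linear_combination P (n+1) z * hW n + (P (n+1) 0) * h2 - (Q (n+1) 0) * h1
  · intro n z
    have h3 := E3 n z
    have h4 := E4 n z
    rw [hP0 0] at h3
    rw [hQ0 0, hQ0 z] at h4
    have hsplit : ∑ k ∈ range (n+1), (Q (n+1) 0 * P k 0 - P (n+1) 0 * Q k 0) * Q k z =
        Q (n+1) 0 * ∑ k ∈ range (n+1), Q k z * P k 0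
        - P (n+1) 0 * ∑ k ∈ range (n+1), Q k z * Q k 0 := by
      rw [mul_sum, mul_sum, ← sum_sub_distrib]
      exact sum_congr rfl (fun k _ => by ring)
    rw [hsplit]
    linear_combination Q (n+1) z * hW n + (P (n+1) 0) * h4 - (Q (n+1) 0) * h3

section Beta
variable {r0 : ℝ} {α : ℝ → ℝ}

private lemma inv_mem_Ioi (hr0 : 0 ≤ r0) {t : ℝ} (ht : 0 < t) (htε : t ≤ (r0+1)⁻¹) :
    t⁻¹ ∈ Set.Ioi r0 := by
  have h1 : r0 + 1 ≤ t⁻¹ := by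
    rw [← inv_inv (r0+1)]
    exact inv_anti₀ (by positivity) htε
  exact Set.mem_Ioi.2 (by linarith)

private lemma beta_nonneg (hα : IsOrderFunction r0 α) {t : ℝ} (ht : 0 ≤ t)
    (htε : t ≤ (r0+1)⁻¹) : 0 ≤ dualFn α t := by
  obtain ⟨hr0, -, hpos, -⟩ := hα
  rcases eq_or_lt_of_le ht with h | h
  · simp [dualFn, ← h]
  · rw [dualFn, if_neg h.ne']
    exact le_of_lt (inv_pos.2 (hpos _ (inv_mem_Ioi hr0 h htε)))

private lemma beta_mono (hα : IsOrderFunction r0 α) {s t : ℝ} (hs : 0 ≤ s) (hst : s ≤ t)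
    (htε : t ≤ (r0+1)⁻¹) : dualFn α s ≤ dualFn α t := by
  obtain ⟨hr0, -, hpos, hmono, -⟩ := id hα
  rcases eq_or_lt_of_le hs with h | h
  · rw [dualFn, if_pos h.symm]
    exact beta_nonneg hα (h ▸ hst) htε
  · have hst' : 0 < t := lt_of_lt_of_le h hst
    rw [dualFn, if_neg h.ne', dualFn, if_neg hst'.ne']
    have hmemt := inv_mem_Ioi hr0 hst' htε
    have hmems := inv_mem_Ioi hr0 h (le_trans hst htε)
    have : α t⁻¹ ≤ α s⁻¹ :=
      hmono.monotoneOn hmemt hmems (by gcongr)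
    exact inv_anti₀ (hpos _ hmemt) this

private lemma beta_scale (hα : IsOrderFunction r0 α) {M t : ℝ} (hM : 1 ≤ M) (ht : 0 < t)
    (htε : M * t ≤ (r0+1)⁻¹) : dualFn α (M * t) ≤ M * dualFn α t := by
  obtain ⟨hr0, -, hpos, -, -, hratio, -⟩ := hα
  have hMt : 0 < M * t := by positivity
  have htε' : t ≤ (r0+1)⁻¹ := le_trans (le_mul_of_one_le_left ht.le hM) htε
  have hu := inv_mem_Ioi hr0 hMt htε
  have hv := inv_mem_Ioi hr0 ht htε'
  have huv : (M*t)⁻¹ ≤ t⁻¹ := by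
    apply inv_anti₀ ht
    exact le_mul_of_one_le_left ht.le hM
  have h := hratio.monotoneOn hu hv huv
  have hαu := hpos _ hu
  have hαv := hpos _ hv
  rw [dualFn, if_neg hMt.ne', dualFn, if_neg ht.ne']
  rw [div_le_div_iff₀ hαu hαv] at h
  -- h : (M*t)⁻¹ * α t⁻¹ ≤ t⁻¹ * α (M*t)⁻¹
  have hM0 : 0 < M := lt_of_lt_of_le one_pos hM
  have key : α t⁻¹ ≤ M * α (M*t)⁻¹ := by
    have h2 := mul_le_mul_of_nonneg_right h hMt.le
    calc α t⁻¹ = (M*t)⁻¹ * α t⁻¹ * (M*t) := by field_simp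
    _ ≤ t⁻¹ * α (M*t)⁻¹ * (M*t) := h2
    _ = M * α (M*t)⁻¹ := by field_simp
  set A := α (M*t)⁻¹ with hA
  set B := α t⁻¹ with hB
  calc A⁻¹ = (M * A)⁻¹ * M := by
        rw [mul_inv, mul_comm M⁻¹, mul_assoc, inv_mul_cancel₀ hM0.ne', mul_one]
    _ ≤ B⁻¹ * M := mul_le_mul_of_nonneg_right (inv_anti₀ hαv key) hM0.le
    _ = M * B⁻¹ := mul_comm _ _

set_option maxHeartbeats 1000000 in
private lemma beta_sum (hα : IsOrderFunction r0 α) {u v w : ℕ → ℝ} {M : ℝ} (hM : 1 ≤ M)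
    (hu : ∀ n, 0 ≤ u n) (hv : ∀ n, 0 ≤ v n) (hw : ∀ n, 0 ≤ w n)
    (hwle : ∀ n, w n ≤ M * (u n + v n))
    (hlim : Filter.Tendsto (fun n => u n + v n) Filter.atTop (nhds 0))
    (hsu : Summable (fun n => dualFn α (u n))) (hsv : Summable (fun n => dualFn α (v n))) :
    Summable (fun n => dualFn α (w n)) := by
  have hM0 : 0 < M := lt_of_lt_of_le one_pos hM
  set ε : ℝ := (r0+1)⁻¹ with hεdef
  have hr0 : 0 ≤ r0 := hα.1
  have hε : 0 < ε := by positivity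
  have hev : ∀ᶠ n in Filter.atTop, u n + v n < ε / (2*M) :=
    hlim.eventually_lt_const (by positivity)
  obtain ⟨N, hN⟩ := Filter.eventually_atTop.1 hev
  have key : ∀ n, N ≤ n → 0 ≤ dualFn α (w n) ∧
      dualFn α (w n) ≤ 2*M*(dualFn α (u n) + dualFn α (v n)) := by
    intro n hn
    have huv := hN n hn
    have huvn : 0 ≤ u n + v n := add_nonneg (hu n) (hv n)
    have h2M : 2*M*(u n + v n) ≤ ε := by
      rw [← le_div_iff₀' (by positivity)]
      exact huv.le
    have hMuv : M * (u n + v n) ≤ ε := le_trans (by nlinarith) h2M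
    have hwε : w n ≤ ε := le_trans (hwle n) hMuv
    refine ⟨beta_nonneg hα (hw n) hwε, ?_⟩
    have step1 : dualFn α (w n) ≤ dualFn α (M * (u n + v n)) :=
      beta_mono hα (hw n) (hwle n) hMuv
    set m : ℝ := max (u n) (v n) with hm
    have hm0 : 0 ≤ m := le_max_of_le_left (hu n)
    rcases eq_or_lt_of_le hm0 with h0 | h0
    · have hu0 : u n = 0 := le_antisymm (le_trans (le_max_left _ _) h0.symm.le) (hu n)
      have hv0 : v n = 0 := le_antisymm (le_trans (le_max_right _ _) h0.symm.le) (hv n)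
      rw [hu0, hv0] at step1 ⊢
      simpa [dualFn] using step1.trans (by simp [dualFn])
    · have huvm : u n + v n ≤ 2*m := by
        have := le_max_left (u n) (v n); have := le_max_right (u n) (v n); linarith
      have h2mε : 2*M*m ≤ ε := by
        refine le_trans ?_ h2M
        have : m ≤ u n + v n := max_le (by linarith [hv n]) (by linarith [hu n])
        nlinarith
      have step2 : dualFn α (M * (u n + v n)) ≤ dualFn α (2*M*m) := by
        apply beta_mono hα (by positivity) (by nlinarith) h2mε
      have step3 : dualFn α (2*M*m) ≤ 2*M * dualFn α m := by
        have := beta_scale hα (M := 2*M) (t := m) (by linarith) h0 (by linarith [h2mε])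
        simpa [mul_assoc] using this
      have humε : u n ≤ ε := le_trans (by nlinarith [hu n, hv n]) hMuv
      have hvmε : v n ≤ ε := le_trans (by nlinarith [hu n, hv n]) hMuv
      have step4 : dualFn α m ≤ dualFn α (u n) + dualFn α (v n) := by
        rcases max_cases (u n) (v n) with ⟨hmeq, -⟩ | ⟨hmeq, -⟩ <;> rw [hm, hmeq]
        · linarith [beta_nonneg hα (hv n) hvmε]
        · linarith [beta_nonneg hα (hu n) humε]
      calc dualFn α (w n) ≤ dualFn α (M * (u n + v n)) := step1
        _ ≤ dualFn α (2*M*m) := step2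
        _ ≤ 2*M * dualFn α m := step3
        _ ≤ 2*M*(dualFn α (u n) + dualFn α (v n)) := by nlinarith
  rw [← summable_nat_add_iff N]
  have h1 : Summable (fun n => dualFn α (u (n+N))) := (summable_nat_add_iff N).2 hsu
  have h2 : Summable (fun n => dualFn α (v (n+N))) := (summable_nat_add_iff N).2 hsv
  exact Summable.of_nonneg_of_le (fun n => (key _ (Nat.le_add_left N n)).1)
    (fun n => (key _ (Nat.le_add_left N n)).2) (((h1.add h2).mul_left (2*M)))

end Beta

set_option maxHeartbeats 2000000 in
/-- Berg–Szwarc, Theorem 4.10. -/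
theorem stmt_11 (a b : ℕ → ℝ) (hb : ∀ n, 0 < b n)
    (P Q : ℕ → ℂ → ℂ)
    (hP0 : ∀ z : ℂ, P 0 z = 1) (hQ0 : ∀ z : ℂ, Q 0 z = 0)
    (hPrec0 : ∀ z : ℂ, z * P 0 z = (b 0 : ℂ) * P 1 z + (a 0 : ℂ) * P 0 z)
    (hQrec0 : ∀ z : ℂ, z * Q 0 z = (b 0 : ℂ) * Q 1 z + (a 0 : ℂ) * Q 0 z - 1)
    (hPrec : ∀ (n : ℕ) (z : ℂ), z * P (n+1) z =
      (b (n+1) : ℂ) * P (n+2) z + (a (n+1) : ℂ) * P (n+1) z + (b n : ℂ) * P n z)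
    (hQrec : ∀ (n : ℕ) (z : ℂ), z * Q (n+1) z =
      (b (n+1) : ℂ) * Q (n+2) z + (a (n+1) : ℂ) * Q (n+1) z + (b n : ℂ) * Q n z)
    (hind : Summable (fun n => ‖P n 0‖ ^ 2 + ‖Q n 0‖ ^ 2))
    (r0 : ℝ) (α : ℝ → ℝ) (hα : IsOrderFunction r0 α) :
    ((Summable (fun n => dualFn α (‖P n 0‖ ^ 2)) ∧
      Summable (fun n => dualFn α (‖Q n 0‖ ^ 2))) ↔
      (∀ z : ℂ, Summable (fun n => dualFn α (‖P n z‖ ^ 2)) ∧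
        Summable (fun n => dualFn α (‖Q n z‖ ^ 2)))) ∧
    ((Summable (fun n => dualFn α (‖P n 0‖ ^ 2)) ∧
      Summable (fun n => dualFn α (‖Q n 0‖ ^ 2))) →
      Summable (fun n => dualFn α (1 / b n)) ∧
      ∃ K : ℝ, 0 < K ∧ ∀ᶠ r : ℝ in Filter.atTop, Pmax P r ≤ r ^ (K * α r)) := by
  classical
  obtain ⟨hW, keyP, keyQ⟩ := key_formulas a b P Q hP0 hQ0 hPrec0 hQrec0 hPrec hQrec
  set d : ℕ → ℝ := fun n => ‖P n 0‖ + ‖Q n 0‖ with hd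
  have hd0 : ∀ n, 0 ≤ d n := fun n => add_nonneg (norm_nonneg _) (norm_nonneg _)
  have hd2le : ∀ n, d n ^ 2 ≤ 2 * (‖P n 0‖ ^ 2 + ‖Q n 0‖ ^ 2) := by
    intro n
    simp only [hd]
    nlinarith [sq_nonneg (‖P n 0‖ - ‖Q n 0‖)]
  have hd2sum : Summable (fun n => d n ^ 2) :=
    Summable.of_nonneg_of_le (fun n => sq_nonneg _) hd2le (hind.mul_left 2)
  set D : ℝ := ∑' n, d n ^ 2 with hD
  have hd2leD : ∀ n, d n ^ 2 ≤ D := fun n => Summable.le_tsum hd2sum n (fun m _ => sq_nonneg _)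
  have hD1 : (1:ℝ) ≤ D := by
    have hd01 : d 0 = 1 := by simp [hd, hP0 0, hQ0 0]
    have h := hd2leD 0
    rw [hd01] at h; simpa using h
  have hD0 : (0:ℝ) < D := lt_of_lt_of_le one_pos hD1
  have hcoef : ∀ m k, ‖Q m 0 * P k 0 - P m 0 * Q k 0‖ ≤ d m * d k := by
    intro m k
    have h1 : ‖Q m 0 * P k 0 - P m 0 * Q k 0‖ ≤
        ‖Q m 0 * P k 0‖ + ‖P m 0 * Q k 0‖ := by
      have := norm_add_le (Q m 0 * P k 0) (-(P m 0 * Q k 0))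
      simpa [sub_eq_add_neg] using this
    rw [norm_mul, norm_mul] at h1
    have e1 := norm_nonneg (P m 0); have e2 := norm_nonneg (Q m 0)
    have e3 := norm_nonneg (P k 0); have e4 := norm_nonneg (Q k 0)
    simp only [hd]
    nlinarith [mul_nonneg e1 e3, mul_nonneg e2 e4]
  have htel : ∀ (x : ℝ) (n : ℕ), ∏ k ∈ Finset.range n, (1 + x * d k ^ 2) =
      1 + x * ∑ k ∈ Finset.range n, d k ^ 2 * ∏ j ∈ Finset.range k, (1 + x * d j ^ 2) := by
    intro x n
    induction n with
    | zero => simp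
    | succ n ih => rw [Finset.prod_range_succ, Finset.sum_range_succ, ih]; ring
  have hbound : ∀ (z : ℂ) (n : ℕ), ‖P n z‖ + ‖Q n z‖ ≤
      d n * ∏ k ∈ Finset.range n, (1 + ‖z‖ * d k ^ 2) := by
    intro z n
    induction n using Nat.strong_induction_on with
    | _ n ih =>
      cases n with
      | zero => simp [hP0 z, hQ0 z, hd, hP0 0, hQ0 0]
      | succ m =>
        set x := ‖z‖ with hx
        have hx0 : 0 ≤ x := norm_nonneg z
        have habs : ∀ R : ℕ → ℂ → ℂ, (R (m+1) z = R (m+1) 0 +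
            z * ∑ k ∈ Finset.range (m+1), (Q (m+1) 0 * P k 0 - P (m+1) 0 * Q k 0) * R k z) →
            ‖R (m+1) z‖ ≤ ‖R (m+1) 0‖ +
              x * ∑ k ∈ Finset.range (m+1), (d (m+1) * d k) * ‖R k z‖ := by
          intro R hR
          rw [hR]
          refine le_trans (norm_add_le _ _) ?_
          rw [norm_mul, ← hx]
          gcongr
          refine le_trans (norm_sum_le _ _) (Finset.sum_le_sum fun k _ => ?_)
          rw [norm_mul]
          exact mul_le_mul_of_nonneg_right (hcoef (m+1) k) (norm_nonneg _)
        have habsP := habs P (keyP m z)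
        have habsQ := habs Q (keyQ m z)
        have hsplit : ∀ f g : ℕ → ℝ,
            ∑ k ∈ Finset.range (m+1), (d (m+1) * d k) * (f k + g k) =
            ∑ k ∈ Finset.range (m+1), (d (m+1) * d k) * f k +
            ∑ k ∈ Finset.range (m+1), (d (m+1) * d k) * g k := by
          intro f g; rw [← Finset.sum_add_distrib]
          exact Finset.sum_congr rfl fun k _ => by ring
        have hsum : ∑ k ∈ Finset.range (m+1),
            (d (m+1) * d k) * (‖P k z‖ + ‖Q k z‖) ≤
            ∑ k ∈ Finset.range (m+1),
              d (m+1) * (d k ^ 2 * ∏ j ∈ Finset.range k, (1 + x * d j ^ 2)) := by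
          refine Finset.sum_le_sum fun k hk => ?_
          have hik := ih k (Finset.mem_range.1 hk)
          calc (d (m+1) * d k) * (‖P k z‖ + ‖Q k z‖)
              ≤ (d (m+1) * d k) * (d k * ∏ j ∈ Finset.range k, (1 + x * d j ^ 2)) := by
                apply mul_le_mul_of_nonneg_left hik (mul_nonneg (hd0 _) (hd0 _))
            _ = d (m+1) * (d k ^ 2 * ∏ j ∈ Finset.range k, (1 + x * d j ^ 2)) := by ring
        have hfin : ‖P (m+1) z‖ + ‖Q (m+1) z‖ ≤
            d (m+1) + x * ∑ k ∈ Finset.range (m+1),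
              d (m+1) * (d k ^ 2 * ∏ j ∈ Finset.range k, (1 + x * d j ^ 2)) := by
          have h2 := hsplit (fun k => ‖P k z‖) (fun k => ‖Q k z‖)
          have h3 := mul_le_mul_of_nonneg_left hsum hx0
          have h4 : x * (∑ k ∈ Finset.range (m+1),
                (d (m+1) * d k) * ‖P k z‖) +
              x * (∑ k ∈ Finset.range (m+1), (d (m+1) * d k) * ‖Q k z‖) ≤
              x * ∑ k ∈ Finset.range (m+1),
                d (m+1) * (d k ^ 2 * ∏ j ∈ Finset.range k, (1 + x * d j ^ 2)) := by
            rw [← mul_add, ← h2]; exact h3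
          have hdm : d (m+1) = ‖P (m+1) 0‖ + ‖Q (m+1) 0‖ := rfl
          linarith [habsP, habsQ]
        refine le_trans hfin (le_of_eq ?_)
        rw [← Finset.mul_sum, htel x (m+1)]
        ring
  have hPabs : ∀ (z : ℂ) (n : ℕ), ‖P n z‖ ≤
      d n * ∏ k ∈ Finset.range n, (1 + ‖z‖ * d k ^ 2) :=
    fun z n => le_trans (le_add_of_nonneg_right (norm_nonneg _)) (hbound z n)
  have hQabs : ∀ (z : ℂ) (n : ℕ), ‖Q n z‖ ≤
      d n * ∏ k ∈ Finset.range n, (1 + ‖z‖ * d k ^ 2) :=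
    fun z n => le_trans (le_add_of_nonneg_left (norm_nonneg _)) (hbound z n)
  have hprod_exp : ∀ (t : ℝ), 0 ≤ t → ∀ n,
      ∏ k ∈ Finset.range n, (1 + t * d k ^ 2) ≤ Real.exp (t * D) := by
    intro t ht n
    calc ∏ k ∈ Finset.range n, (1 + t * d k ^ 2)
        ≤ ∏ k ∈ Finset.range n, Real.exp (t * d k ^ 2) :=
          Finset.prod_le_prod (fun k _ => by positivity)
            (fun k _ => by linarith [Real.add_one_le_exp (t * d k ^ 2)])
      _ = Real.exp (∑ k ∈ Finset.range n, t * d k ^ 2) := (Real.exp_sum _ _).symm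
      _ ≤ Real.exp (t * D) := by
          apply Real.exp_le_exp.2
          rw [← Finset.mul_sum]
          exact mul_le_mul_of_nonneg_left
            (Summable.sum_le_tsum _ (fun m _ => sq_nonneg _) hd2sum) ht
  have htend : Filter.Tendsto (fun n => d n ^ 2) Filter.atTop (nhds 0) :=
    hd2sum.tendsto_atTop_zero
  have hβd : Summable (fun n => dualFn α (‖P n 0‖ ^ 2)) →
      Summable (fun n => dualFn α (‖Q n 0‖ ^ 2)) →
      Summable (fun n => dualFn α (d n ^ 2)) := fun hsP hsQ =>
    beta_sum hα one_le_two (fun n => sq_nonneg _) (fun n => sq_nonneg _)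
      (fun n => sq_nonneg _) hd2le hind.tendsto_atTop_zero hsP hsQ
  have hz_sum : ∀ z : ℂ, Summable (fun n => dualFn α (d n ^ 2)) →
      (Summable (fun n => dualFn α (‖P n z‖ ^ 2)) ∧
        Summable (fun n => dualFn α (‖Q n z‖ ^ 2))) := by
    intro z hdsum
    set M : ℝ := Real.exp (2 * ‖z‖ * D) with hM
    have hM1 : (1:ℝ) ≤ M := Real.one_le_exp (by positivity)
    have hlim2 : Filter.Tendsto (fun n => d n ^ 2 + d n ^ 2) Filter.atTop (nhds 0) := by
      simpa using htend.add htend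
    have hRle : ∀ (R : ℕ → ℂ → ℂ),
        (∀ n, ‖R n z‖ ≤ d n * ∏ k ∈ Finset.range n, (1 + ‖z‖ * d k ^ 2)) →
        ∀ n, ‖R n z‖ ^ 2 ≤ M * (d n ^ 2 + d n ^ 2) := by
      intro R hR n
      have h1 := hR n
      have h2 : d n * ∏ k ∈ Finset.range n, (1 + ‖z‖ * d k ^ 2) ≤
          d n * Real.exp (‖z‖ * D) :=
        mul_le_mul_of_nonneg_left (hprod_exp _ (norm_nonneg z) n) (hd0 n)
      have h3 : ‖R n z‖ ≤ d n * Real.exp (‖z‖ * D) := le_trans h1 h2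
      have h4 := pow_le_pow_left₀ (norm_nonneg _) h3 2
      have h5 : (d n * Real.exp (‖z‖ * D)) ^ 2 = d n ^ 2 * M := by
        rw [hM, mul_pow, ← Real.exp_nat_mul]
        ring_nf
      rw [h5] at h4
      nlinarith [sq_nonneg (d n), hM1]
    constructor
    · exact beta_sum hα hM1 (fun n => sq_nonneg _) (fun n => sq_nonneg _)
        (fun n => sq_nonneg _) (hRle P (hPabs z)) hlim2 hdsum hdsum
    · exact beta_sum hα hM1 (fun n => sq_nonneg _) (fun n => sq_nonneg _)
        (fun n => sq_nonneg _) (hRle Q (hQabs z)) hlim2 hdsum hdsum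
  constructor
  · constructor
    · rintro ⟨hsP, hsQ⟩ z
      exact hz_sum z (hβd hsP hsQ)
    · intro H
      exact H 0
  · rintro ⟨hsP, hsQ⟩
    have hdsum := hβd hsP hsQ
    have hbsum : Summable (fun n => dualFn α (1 / b n)) := by
      have hwle : ∀ n, 1 / b n ≤ 1 * (d n ^ 2 + d (n+1) ^ 2) := by
        intro n
        have h := congrArg (‖·‖) (hW n)
        rw [norm_mul] at h
        have hbn : ‖((b n : ℝ) : ℂ)‖ = b n := by
          rw [Complex.norm_real, Real.norm_eq_abs, abs_of_pos (hb n)]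
        rw [hbn] at h
        simp only [norm_neg, norm_one] at h
        have habs1 : ‖P (n+1) 0 * Q n 0 - P n 0 * Q (n+1) 0‖ ≤
            d (n+1) * d n := by
          have h1 : ‖P (n+1) 0 * Q n 0 - P n 0 * Q (n+1) 0‖ ≤
              ‖P (n+1) 0 * Q n 0‖ + ‖P n 0 * Q (n+1) 0‖ := by
            have := norm_add_le (P (n+1) 0 * Q n 0) (-(P n 0 * Q (n+1) 0))
            simpa [sub_eq_add_neg] using this
          rw [norm_mul, norm_mul] at h1
          have e1 := norm_nonneg (P (n+1) 0); have e2 := norm_nonneg (Q (n+1) 0)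
          have e3 := norm_nonneg (P n 0); have e4 := norm_nonneg (Q n 0)
          have hdn : d n = ‖P n 0‖ + ‖Q n 0‖ := rfl
          have hdn1 : d (n+1) = ‖P (n+1) 0‖ + ‖Q (n+1) 0‖ := rfl
          rw [hdn, hdn1]
          nlinarith [mul_nonneg e1 e4, mul_nonneg e2 e3]
        have h2 : 1 ≤ b n * (d (n+1) * d n) := by
          rw [← h]
          exact mul_le_mul_of_nonneg_left habs1 (hb n).le
        rw [one_mul, div_le_iff₀ (hb n)]
        nlinarith [sq_nonneg (d n - d (n+1)), sq_nonneg (d n + d (n+1)), hb n, h2,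
          mul_le_mul_of_nonneg_left (sq_nonneg (d n - d (n+1))) (hb n).le]
      have hsv : Summable (fun n => dualFn α (d (n+1) ^ 2)) :=
        (summable_nat_add_iff 1).2 hdsum
      have htend1 : Filter.Tendsto (fun n => d n ^ 2 + d (n+1) ^ 2) Filter.atTop (nhds 0) := by
        have h2 : Filter.Tendsto (fun n => d (n+1) ^ 2) Filter.atTop (nhds 0) :=
          htend.comp (Filter.tendsto_add_atTop_nat 1)
        simpa using htend.add h2
      exact beta_sum hα le_rfl (fun n => sq_nonneg _) (fun n => sq_nonneg _)
        (fun n => (div_pos one_pos (hb n)).le) hwle htend1 hdsum hsv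
    refine ⟨hbsum, ?_⟩
    obtain ⟨hr00, -, hαpos, hαmono, hαtop, hratio, -⟩ := id hα
    set g : ℕ → ℝ := fun n => |dualFn α (d n ^ 2)| with hg
    have hgsum : Summable g := hdsum.abs
    set Sg : ℝ := ∑' n, g n with hSg
    have hSg0 : 0 ≤ Sg := tsum_nonneg (fun n => abs_nonneg _)
    set ε : ℝ := (r0 + 1)⁻¹ with hε
    have hε0 : 0 < ε := by rw [hε]; positivity
    have hε1 : ε ≤ 1 := by
      rw [hε]
      rw [inv_le_one_iff₀]
      right; linarith
    obtain ⟨N, hN⟩ : ∃ N : ℕ, ∀ n ≥ N, d n ^ 2 < ε :=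
      Filter.eventually_atTop.1 (htend.eventually_lt_const hε0)
    refine ⟨2 * Sg + N + 2, by positivity, ?_⟩
    have e1 : ∀ᶠ r : ℝ in Filter.atTop, r0 < r := Filter.eventually_gt_atTop r0
    have e2 : ∀ᶠ r : ℝ in Filter.atTop, Real.exp 1 ≤ r := Filter.eventually_ge_atTop _
    have e3 : ∀ᶠ r : ℝ in Filter.atTop, 2 ≤ α r := hαtop.eventually_ge_atTop 2
    have e4 : ∀ᶠ r : ℝ in Filter.atTop, D + 1 ≤ r := Filter.eventually_ge_atTop _
    have e5 : ∀ᶠ r : ℝ in Filter.atTop, Real.sqrt D ≤ r := Filter.eventually_ge_atTop _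
    have e6 : ∀ᶠ r : ℝ in Filter.atTop, (2:ℝ) ≤ r := Filter.eventually_ge_atTop _
    filter_upwards [e1, e2, e3, e4, e5, e6] with r hr1 hr2 hr3 hr4 hr5 hr6
    have hr_pos : 0 < r := lt_of_lt_of_le (Real.exp_pos 1) hr2
    have hr1' : (1:ℝ) ≤ r := le_trans (Real.one_le_exp zero_le_one) hr2
    have hlogr : 1 ≤ Real.log r := by
      have := Real.log_le_log (Real.exp_pos 1) hr2
      rwa [Real.log_exp] at this
    have hlog_pos : 0 < Real.log r := lt_of_lt_of_le one_pos hlogr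
    have hαr : 0 < α r := hαpos r (Set.mem_Ioi.2 hr1)
    have hsummable : Summable (fun k => Real.log (1 + r * d k ^ 2)) := by
      refine Summable.of_nonneg_of_le
        (fun k => Real.log_nonneg (by nlinarith [sq_nonneg (d k)]))
        (fun k => ?_) (hd2sum.mul_left r)
      have h := Real.log_le_sub_one_of_pos
        (show (0:ℝ) < 1 + r * d k ^ 2 by positivity)
      linarith
    have htail : ∀ k, N ≤ k →
        Real.log (1 + r * d k ^ 2) ≤ 2 * α r * Real.log r * g k := by
      intro k hk
      have hdk : d k ^ 2 < ε := hN k hk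
      rcases eq_or_lt_of_le (sq_nonneg (d k)) with h0 | h0
      · have hgk0 : g k = 0 := by rw [hg]; simp only; rw [← h0]; simp [dualFn]
        rw [hgk0, ← h0]
        simp
      · have hs : (d k ^ 2)⁻¹ ∈ Set.Ioi r0 := inv_mem_Ioi hr00 h0 hdk.le
        have hαs : 0 < α (d k ^ 2)⁻¹ := hαpos _ hs
        have hgk : g k = (α (d k ^ 2)⁻¹)⁻¹ := by
          rw [hg]
          simp only
          rw [dualFn, if_neg h0.ne']
          exact abs_of_nonneg (inv_pos.2 hαs).le
        have hgk0 : 0 ≤ g k := abs_nonneg _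
        have hmem_r : r ∈ Set.Ioi r0 := Set.mem_Ioi.2 hr1
        rcases le_or_gt (r * d k ^ 2) 1 with hc | hc
        · have h1 : Real.log (1 + r * d k ^ 2) ≤ r * d k ^ 2 := by
            have := Real.log_le_sub_one_of_pos
              (show (0:ℝ) < 1 + r * d k ^ 2 by positivity)
            linarith
          have hrs : r ≤ (d k ^ 2)⁻¹ := by
            rw [← one_div, le_div_iff₀ h0]
            linarith
          have hmono := hratio.monotoneOn hmem_r hs hrs
          rw [div_le_div_iff₀ hαr hαs] at hmono
          -- hmono : r * α (d k ^2)⁻¹ ≤ (d k ^2)⁻¹ * α r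
          have h3 := mul_le_mul_of_nonneg_right hmono h0.le
          have h5 : ((d k ^ 2)⁻¹ * α r) * d k ^ 2 = α r := by
            rw [mul_comm, ← mul_assoc, mul_inv_cancel₀ h0.ne', one_mul]
          rw [h5] at h3
          have h2 : r * d k ^ 2 ≤ α r * g k := by
            rw [hgk, ← div_eq_mul_inv, le_div_iff₀ hαs]
            calc (r * d k ^ 2) * α (d k ^ 2)⁻¹ = (r * α (d k ^ 2)⁻¹) * d k ^ 2 := by ring
              _ ≤ α r := h3
          calc Real.log (1 + r * d k ^ 2) ≤ r * d k ^ 2 := h1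
            _ ≤ α r * g k := h2
            _ ≤ 2 * α r * Real.log r * g k := by nlinarith [mul_nonneg hαr.le hgk0]
        · have hsle : (d k ^ 2)⁻¹ ≤ r := by
            rw [← one_div, div_le_iff₀ h0]
            nlinarith
          have hαsr : α (d k ^ 2)⁻¹ ≤ α r := hαmono.monotoneOn hs hmem_r hsle
          have h1le : 1 ≤ α r * g k := by
            rw [hgk, ← div_eq_mul_inv, le_div_iff₀ hαs, one_mul]
            exact hαsr
          have hlog2 : Real.log (1 + r * d k ^ 2) ≤ 2 * Real.log r := by
            have hb1 : 1 + r * d k ^ 2 ≤ r * r := by nlinarith [hε1, h0]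
            calc Real.log (1 + r * d k ^ 2) ≤ Real.log (r * r) :=
                  Real.log_le_log (by positivity) hb1
              _ = 2 * Real.log r := by
                  rw [Real.log_mul hr_pos.ne' hr_pos.ne']; ring
          calc Real.log (1 + r * d k ^ 2) ≤ 2 * Real.log r := hlog2
            _ = 2 * Real.log r * 1 := (mul_one _).symm
            _ ≤ 2 * Real.log r * (α r * g k) :=
                mul_le_mul_of_nonneg_left h1le (by positivity)
            _ = 2 * α r * Real.log r * g k := by ring
    set L : ℝ := ∑' k, Real.log (1 + r * d k ^ 2) with hL
    have hLbound : L ≤ N * Real.log (1 + r * D) + 2 * α r * Real.log r * Sg := by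
      have hhead : ∑ k ∈ Finset.range N, Real.log (1 + r * d k ^ 2) ≤
          N * Real.log (1 + r * D) := by
        calc ∑ k ∈ Finset.range N, Real.log (1 + r * d k ^ 2)
            ≤ ∑ _k ∈ Finset.range N, Real.log (1 + r * D) :=
              Finset.sum_le_sum fun k _ => Real.log_le_log (by positivity)
                (by nlinarith [hd2leD k])
          _ = N * Real.log (1 + r * D) := by
              rw [Finset.sum_const, Finset.card_range, nsmul_eq_mul]
      have htail2 : ∑' k : ℕ, Real.log (1 + r * d (k + N) ^ 2) ≤
          2 * α r * Real.log r * Sg := by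
        have hs1 : Summable (fun k => Real.log (1 + r * d (k + N) ^ 2)) :=
          (summable_nat_add_iff N).2 hsummable
        have hs2 : Summable (fun k : ℕ => 2 * α r * Real.log r * g (k + N)) :=
          ((summable_nat_add_iff N).2 hgsum).mul_left _
        calc ∑' k : ℕ, Real.log (1 + r * d (k + N) ^ 2)
            ≤ ∑' k : ℕ, 2 * α r * Real.log r * g (k + N) :=
              Summable.tsum_le_tsum (fun k => htail (k + N) (Nat.le_add_left N k)) hs1 hs2
          _ = 2 * α r * Real.log r * ∑' k : ℕ, g (k + N) := tsum_mul_left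
          _ ≤ 2 * α r * Real.log r * Sg := by
              apply mul_le_mul_of_nonneg_left _ (by positivity)
              have heq := Summable.sum_add_tsum_nat_add N hgsum
              have hnn : 0 ≤ ∑ k ∈ Finset.range N, g k :=
                Finset.sum_nonneg fun k _ => abs_nonneg _
              rw [hSg]
              linarith [heq]
      have hsplitL := Summable.sum_add_tsum_nat_add N hsummable
      rw [hL, ← hsplitL]
      linarith [hhead, htail2]
    have hdisk : ∀ z : ℂ, ‖z‖ ≤ r →
        Real.sqrt (∑' n : ℕ, ‖P n z‖ ^ 2) ≤ Real.sqrt D * Real.exp L := by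
      intro z hz
      have hprodL : ∀ n, ∏ k ∈ Finset.range n, (1 + ‖z‖ * d k ^ 2) ≤
          Real.exp L := by
        intro n
        calc ∏ k ∈ Finset.range n, (1 + ‖z‖ * d k ^ 2)
            ≤ ∏ k ∈ Finset.range n, (1 + r * d k ^ 2) :=
              Finset.prod_le_prod (fun k _ => by positivity)
                (fun k _ => by nlinarith [sq_nonneg (d k), norm_nonneg z])
          _ = Real.exp (∑ k ∈ Finset.range n, Real.log (1 + r * d k ^ 2)) := by
              rw [Real.exp_sum]
              exact Finset.prod_congr rfl fun k _ =>
                (Real.exp_log (by positivity)).symm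
          _ ≤ Real.exp L := Real.exp_le_exp.2
              (Summable.sum_le_tsum _ (fun k _ => Real.log_nonneg (by nlinarith [sq_nonneg (d k)]))
                hsummable)
      have hsum_le : ∀ n : ℕ, ‖P n z‖ ^ 2 ≤ d n ^ 2 * Real.exp L ^ 2 := by
        intro n
        have h1 : ‖P n z‖ ≤ d n * Real.exp L :=
          le_trans (hPabs z n) (mul_le_mul_of_nonneg_left (hprodL n) (hd0 n))
        have h4 := pow_le_pow_left₀ (norm_nonneg _) h1 2
        rwa [mul_pow] at h4
      have hsumm2 : Summable (fun n => d n ^ 2 * Real.exp L ^ 2) := hd2sum.mul_right _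
      have hsP2 : Summable (fun n : ℕ => ‖P n z‖ ^ 2) :=
        Summable.of_nonneg_of_le (fun n => sq_nonneg _) hsum_le hsumm2
      have h6 : ∑' n : ℕ, ‖P n z‖ ^ 2 ≤ D * Real.exp L ^ 2 := by
        calc ∑' n : ℕ, ‖P n z‖ ^ 2
            ≤ ∑' n : ℕ, d n ^ 2 * Real.exp L ^ 2 := Summable.tsum_le_tsum hsum_le hsP2 hsumm2
          _ = D * Real.exp L ^ 2 := by rw [tsum_mul_right]
      calc Real.sqrt (∑' n : ℕ, ‖P n z‖ ^ 2)
          ≤ Real.sqrt (D * Real.exp L ^ 2) := Real.sqrt_le_sqrt h6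
        _ = Real.sqrt D * Real.exp L := by
            rw [Real.sqrt_mul hD0.le, Real.sqrt_sq (Real.exp_nonneg _)]
    have hfinal : Real.sqrt D * Real.exp L ≤ r ^ ((2 * Sg + N + 2) * α r) := by
      rw [Real.rpow_def_of_pos hr_pos]
      have hsd : Real.sqrt D * Real.exp L =
          Real.exp (Real.log (Real.sqrt D) + L) := by
        rw [Real.exp_add, Real.exp_log (Real.sqrt_pos.2 hD0)]
      rw [hsd]
      apply Real.exp_le_exp.2
      have hlsD : Real.log (Real.sqrt D) ≤ Real.log r :=
        Real.log_le_log (Real.sqrt_pos.2 hD0) hr5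
      have hlog1rD : Real.log (1 + r * D) ≤ 2 * Real.log r := by
        have hb1 : 1 + r * D ≤ r * r := by nlinarith
        calc Real.log (1 + r * D) ≤ Real.log (r * r) :=
              Real.log_le_log (by positivity) hb1
          _ = 2 * Real.log r := by rw [Real.log_mul hr_pos.ne' hr_pos.ne']; ring
      have f1 : (N:ℝ) * Real.log (1 + r * D) ≤ (N:ℝ) * (2 * Real.log r) :=
        mul_le_mul_of_nonneg_left hlog1rD (Nat.cast_nonneg N)
      have f2 : ((N:ℝ) + 2) * 2 * Real.log r ≤ ((N:ℝ) + 2) * α r * Real.log r := by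
        apply mul_le_mul_of_nonneg_right _ hlog_pos.le
        apply mul_le_mul_of_nonneg_left hr3 (by positivity)
      nlinarith [hLbound, hlsD, f1, f2, hlogr, hlog_pos]
    apply Real.sSup_le
    · rintro x ⟨z, hz, rfl⟩
      have hzr : ‖z‖ ≤ r := by
        rw [Metric.mem_closedBall, dist_zero_right] at hz
        exact le_trans (le_of_eq rfl) hz
      exact le_trans (hdisk z hzr) hfinal
    · exact Real.rpow_nonneg hr_pos.le _
end

section
/- Let μ be a probability measure on ℝ with infinite support and finite moments s_n = ∫ x^n dμ(x) of all orders, and let (P_n)_{n≥0} be the orthonormal polynomials of μ: P_n is a real polynomial of degree n with positive leading coefficient b_{n,n}, and ∫ P_m(x) P_n(x) dμ(x) = δ_{mn}. Write P_n(x) = ∑_{k=0}^n b_{k,n} x^k and assume c_n := (∑_{m=n}^∞ b_{n,m}²)^{1/2} < ∞ for every n (which holds when the moment problem is indeterminate). Then: (i) 1 ≤ s_{2n}·b_{n,n}² ≤ c_n²·s_{2n} for all n ≥ 0; (ii) for every r ≥ 0, ∑_{n=0}^∞ r^n/√(s_{2n}) ≤ ∑_{n=0}^∞ b_{n,n} r^n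 ≤ ∑_{n=0}^∞ c_n r^n, as an inequality of sums in [0,∞]; in particular, whenever the right-hand series converges, the maximum moduli of the entire functions L(z) = ∑ z^n/√(s_{2n}), H(z) = ∑ b_{n,n} z^n and Φ(z) = ∑ c_n z^n satisfy M_L(r) ≤ M_H(r) ≤ M_Φ(r). -/
open MeasureTheory

open Polynomial

lemma bs_int_poly (μ : Measure ℝ) (hint : ∀ n : ℕ, Integrable (fun x => x ^ n) μ)
    (p : Polynomial ℝ) : Integrable (fun x => p.eval x) μ := by
  have h : (fun x : ℝ => p.eval x)
      = fun x => ∑ k ∈ Finset.range (p.natDegree + 1), p.coeff k * x ^ k := by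
    funext x; rw [Polynomial.eval_eq_sum_range]
  rw [h]
  exact integrable_finset_sum _ (fun k _ => (hint k).const_mul _)

lemma bs_int_mul (μ : Measure ℝ) (hint : ∀ n : ℕ, Integrable (fun x => x ^ n) μ)
    (p q : Polynomial ℝ) : Integrable (fun x => p.eval x * q.eval x) μ := by
  simpa [Polynomial.eval_mul] using bs_int_poly μ hint (p * q)

lemma bs_cs (μ : Measure ℝ) (f g : ℝ → ℝ)
    (hff : Integrable (fun x => f x * f x) μ)
    (hgg : Integrable (fun x => g x * g x) μ)
    (hfg : Integrable (fun x => f x * g x) μ) :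
    (∫ x, f x * g x ∂μ) ^ 2 ≤ (∫ x, f x * f x ∂μ) * (∫ x, g x * g x ∂μ) := by
  set A := ∫ x, f x * f x ∂μ with hA
  set B := ∫ x, f x * g x ∂μ with hB
  set C := ∫ x, g x * g x ∂μ with hC
  have key : ∀ t : ℝ, 0 ≤ A * (t * t) + (2 * B) * t + C := by
    intro t
    have e : (fun x => (t * t) * (f x * f x) + ((2 * t) * (f x * g x) + g x * g x))
        = fun x => (t * f x + g x) ^ 2 := by funext x; ring
    have hi : ∫ x, ((t * t) * (f x * f x) + ((2 * t) * (f x * g x) + g x * g x)) ∂μ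
        = (t * t) * A + ((2 * t) * B + C) := by
      have h2 : Integrable (fun x => (2 * t) * (f x * g x) + g x * g x) μ :=
        (hfg.const_mul _).add hgg
      rw [integral_add (hff.const_mul (t * t)) h2, integral_add (hfg.const_mul (2 * t)) hgg,
        integral_const_mul, integral_const_mul]
    have h0 : 0 ≤ ∫ x, (t * f x + g x) ^ 2 ∂μ :=
      integral_nonneg fun x => sq_nonneg _
    rw [← e, hi] at h0
    linarith
  have hd := discrim_le_zero key
  rw [discrim] at hd
  nlinarith [hd]

lemma bs_span (Pp : ℕ → Polynomial ℝ) (hdeg : ∀ n, (Pp n).natDegree = n)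
    (hlead : ∀ n, 0 < (Pp n).leadingCoeff) :
    ∀ (n : ℕ) (p : Polynomial ℝ), p.natDegree ≤ n →
      ∃ a : ℕ → ℝ, p = ∑ m ∈ Finset.range (n + 1), Polynomial.C (a m) * Pp m := by
  have hb : ∀ n, (Pp n).coeff n ≠ 0 := by
    intro n
    have := hlead n
    rw [Polynomial.leadingCoeff, hdeg n] at this
    exact this.ne'
  intro n
  induction n with
  | zero =>
    intro p hp
    have hb0 := hb 0
    set b0 := (Pp 0).coeff 0 with hb0def
    have h0 : Pp 0 = Polynomial.C b0 := Polynomial.eq_C_of_natDegree_le_zero (le_of_eq (hdeg 0))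
    refine ⟨fun _ => p.coeff 0 / b0, ?_⟩
    rw [Finset.sum_range_one]
    show p = Polynomial.C (p.coeff 0 / b0) * Pp 0
    rw [h0, ← Polynomial.C_mul, div_mul_cancel₀ _ hb0]
    exact Polynomial.eq_C_of_natDegree_le_zero hp
  | succ n ih =>
    intro p hp
    set q := p - Polynomial.C (p.coeff (n + 1) / (Pp (n + 1)).coeff (n + 1)) * Pp (n + 1)
      with hqdef
    have hqdeg : q.natDegree ≤ n := by
      rw [Polynomial.natDegree_le_iff_coeff_eq_zero]
      intro N hN
      have hN' : n + 1 ≤ N := hN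
      rcases eq_or_lt_of_le hN' with h | h
      · simp only [hqdef, Polynomial.coeff_sub, Polynomial.coeff_C_mul, ← h]
        rw [div_mul_cancel₀ _ (hb (n + 1)), sub_self]
      · have h1 : p.coeff N = 0 :=
          Polynomial.coeff_eq_zero_of_natDegree_lt (lt_of_le_of_lt hp h)
        have h2 : (Pp (n + 1)).coeff N = 0 :=
          Polynomial.coeff_eq_zero_of_natDegree_lt (by rw [hdeg]; exact h)
        simp [hqdef, h1, h2]
    obtain ⟨a, ha⟩ := ih q hqdeg
    refine ⟨fun m => if m = n + 1 then p.coeff (n + 1) / (Pp (n + 1)).coeff (n + 1) else a m, ?_⟩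
    have he : ∑ m ∈ Finset.range (n + 1),
        Polynomial.C (if m = n + 1 then p.coeff (n + 1) / (Pp (n + 1)).coeff (n + 1) else a m)
          * Pp m = ∑ m ∈ Finset.range (n + 1), Polynomial.C (a m) * Pp m := by
      refine Finset.sum_congr rfl fun m hm => ?_
      rw [if_neg (Nat.ne_of_lt (Finset.mem_range.mp hm))]
    rw [Finset.sum_range_succ]
    simp only []
    rw [he, if_pos trivial, ← ha, hqdef]
    ring

lemma bs_orth (μ : Measure ℝ) (hint : ∀ n : ℕ, Integrable (fun x => x ^ n) μ)
    (Pp : ℕ → Polynomial ℝ) (hdeg : ∀ n, (Pp n).natDegree = n)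
    (hlead : ∀ n, 0 < (Pp n).leadingCoeff)
    (horth : ∀ m n, (∫ x, (Pp m).eval x * (Pp n).eval x ∂μ) = if m = n then 1 else 0) :
    ∀ (N : ℕ) (p : Polynomial ℝ), p.degree < (N : ℕ) →
      ∫ x, p.eval x * (Pp N).eval x ∂μ = 0 := by
  intro N p hp
  rcases eq_or_ne p 0 with rfl | hne
  · simp
  have hnd : p.natDegree < N := (Polynomial.natDegree_lt_iff_degree_lt hne).mpr hp
  obtain ⟨a, ha⟩ := bs_span Pp hdeg hlead p.natDegree p le_rfl
  have he : (fun x => p.eval x * (Pp N).eval x)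
      = fun x => ∑ m ∈ Finset.range (p.natDegree + 1),
          a m * ((Pp m).eval x * (Pp N).eval x) := by
    funext x
    conv_lhs => rw [ha]
    rw [Polynomial.eval_finset_sum, Finset.sum_mul]
    refine Finset.sum_congr rfl fun m _ => ?_
    simp [mul_assoc]
  rw [he, integral_finset_sum _ (fun m _ => ((bs_int_mul μ hint (Pp m) (Pp N)).const_mul _))]
  refine Finset.sum_eq_zero fun m hm => ?_
  rw [integral_const_mul, horth m N, if_neg, mul_zero]
  exact Nat.ne_of_lt (lt_of_lt_of_le (Finset.mem_range.mp hm) hnd)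

lemma bs_key (μ : Measure ℝ) (hint : ∀ n : ℕ, Integrable (fun x => x ^ n) μ)
    (Pp : ℕ → Polynomial ℝ) (hdeg : ∀ n, (Pp n).natDegree = n)
    (hlead : ∀ n, 0 < (Pp n).leadingCoeff)
    (horth : ∀ m n, (∫ x, (Pp m).eval x * (Pp n).eval x ∂μ) = if m = n then 1 else 0) :
    ∀ n : ℕ, ∫ x, x ^ n * (Pp n).eval x ∂μ = 1 / (Pp n).leadingCoeff := by
  intro n
  have hbne : (Pp n).leadingCoeff ≠ 0 := (hlead n).ne'
  have hcoeff : (Pp n).coeff n = (Pp n).leadingCoeff := by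
    rw [Polynomial.leadingCoeff, hdeg n]
  set q : Polynomial ℝ := Polynomial.X ^ n - Polynomial.C (1 / (Pp n).leadingCoeff) * Pp n
    with hq
  have hqdeg : q.degree < (n : ℕ) := by
    rw [Polynomial.degree_lt_iff_coeff_zero]
    intro m hm
    have hm' : n ≤ m := by exact_mod_cast hm
    rcases eq_or_lt_of_le hm' with rfl | h
    · simp only [hq, Polynomial.coeff_sub, Polynomial.coeff_C_mul, Polynomial.coeff_X_pow,
        if_pos rfl, hcoeff]
      simp [inv_mul_cancel₀ hbne]
    · have h1 : (Pp n).coeff m = 0 :=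
        Polynomial.coeff_eq_zero_of_natDegree_lt (by rw [hdeg]; exact h)
      simp [hq, h1, Polynomial.coeff_X_pow, Nat.ne_of_gt h]
  have he : (fun x : ℝ => x ^ n * (Pp n).eval x)
      = fun x => q.eval x * (Pp n).eval x
          + (1 / (Pp n).leadingCoeff) * ((Pp n).eval x * (Pp n).eval x) := by
    funext x
    simp only [hq, Polynomial.eval_sub, Polynomial.eval_mul, Polynomial.eval_pow,
      Polynomial.eval_X, Polynomial.eval_C]
    ring
  rw [he, integral_add (bs_int_mul μ hint q (Pp n))
      ((bs_int_mul μ hint (Pp n) (Pp n)).const_mul _),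
    integral_const_mul, bs_orth μ hint Pp hdeg hlead horth n q hqdeg, horth n n, if_pos rfl]
  simp

/-- Berg–Szwarc, Proposition 7.1: for the orthonormal polynomials of a probability measure
`μ` with infinite support and finite moments, with leading coefficients `b_{n,n}`,
moments `s_n`, and `c_n = (∑_{m=n}^∞ b_{n,m}²)^{1/2}`:
(i) `1 ≤ s_{2n}·b_{n,n}² ≤ c_n²·s_{2n}`;
(ii) for `r ≥ 0`, `∑ r^n/√(s_{2n}) ≤ ∑ b_{n,n} r^n ≤ ∑ c_n r^n` as sums in `[0,∞]`,
and as real sums whenever the right-hand series converges, so the maximum moduli of the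
entire functions `L`, `H`, `Φ` satisfy `M_L(r) ≤ M_H(r) ≤ M_Φ(r)`. -/
theorem stmt_19 (μ : Measure ℝ) [IsProbabilityMeasure μ]
    (hsupp : ∀ s : Finset ℝ, μ ((↑s : Set ℝ)ᶜ) ≠ 0)
    (hint : ∀ n : ℕ, Integrable (fun x => x ^ n) μ)
    (s : ℕ → ℝ) (hs : ∀ n, s n = ∫ x, x ^ n ∂μ)
    (Pp : ℕ → Polynomial ℝ)
    (hdeg : ∀ n, (Pp n).natDegree = n)
    (hlead : ∀ n, 0 < (Pp n).leadingCoeff)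
    (horth : ∀ m n, (∫ x, (Pp m).eval x * (Pp n).eval x ∂μ) = if m = n then 1 else 0)
    (c : ℕ → ℝ)
    (hc : ∀ n, c n = Real.sqrt (∑' m : ℕ, if n ≤ m then ((Pp m).coeff n) ^ 2 else 0))
    (hcfin : ∀ n, Summable (fun m : ℕ => if n ≤ m then ((Pp m).coeff n) ^ 2 else 0)) :
    (∀ n : ℕ, 1 ≤ s (2 * n) * (Pp n).leadingCoeff ^ 2 ∧
      s (2 * n) * (Pp n).leadingCoeff ^ 2 ≤ (c n) ^ 2 * s (2 * n)) ∧
    (∀ r : ℝ, 0 ≤ r →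
      ((∑' n : ℕ, ENNReal.ofReal (r ^ n / Real.sqrt (s (2 * n)))) ≤
          (∑' n : ℕ, ENNReal.ofReal ((Pp n).leadingCoeff * r ^ n)) ∧
        (∑' n : ℕ, ENNReal.ofReal ((Pp n).leadingCoeff * r ^ n)) ≤
          (∑' n : ℕ, ENNReal.ofReal (c n * r ^ n))) ∧
      (Summable (fun n => c n * r ^ n) →
        (∑' n : ℕ, r ^ n / Real.sqrt (s (2 * n))) ≤
            (∑' n : ℕ, (Pp n).leadingCoeff * r ^ n) ∧
          (∑' n : ℕ, (Pp n).leadingCoeff * r ^ n) ≤ (∑' n : ℕ, c n * r ^ n))) := by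
  -- per-n facts
  have hcoeff : ∀ n, (Pp n).coeff n = (Pp n).leadingCoeff := fun n => by
    rw [Polynomial.leadingCoeff, hdeg n]
  have hkey := bs_key μ hint Pp hdeg hlead horth
  have hcs : ∀ n : ℕ, (1 / (Pp n).leadingCoeff) ^ 2 ≤ s (2 * n) := by
    intro n
    have hff : Integrable (fun x : ℝ => x ^ n * x ^ n) μ := by
      have := hint (n + n)
      simp only [pow_add] at this
      exact this
    have hfg : Integrable (fun x : ℝ => x ^ n * (Pp n).eval x) μ := by
      have h := bs_int_mul μ hint (Polynomial.X ^ n) (Pp n)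
      simp only [Polynomial.eval_pow, Polynomial.eval_X] at h
      exact h
    have h := bs_cs μ (fun x => x ^ n) (fun x => (Pp n).eval x) hff
      (bs_int_mul μ hint (Pp n) (Pp n)) hfg
    have hIs : ∫ x, x ^ n * x ^ n ∂μ = s (2 * n) := by
      rw [hs (2 * n)]
      have : (fun x : ℝ => x ^ n * x ^ n) = fun x => x ^ (2 * n) := by
        funext x; rw [two_mul, pow_add]
      rw [this]
    rw [hkey n, hIs, horth n n, if_pos rfl, mul_one] at h
    exact h
  have hone : ∀ n : ℕ, 1 ≤ s (2 * n) * (Pp n).leadingCoeff ^ 2 := by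
    intro n
    have hbne : (Pp n).leadingCoeff ≠ 0 := (hlead n).ne'
    calc (1 : ℝ) = (1 / (Pp n).leadingCoeff) ^ 2 * (Pp n).leadingCoeff ^ 2 := by
          field_simp
      _ ≤ s (2 * n) * (Pp n).leadingCoeff ^ 2 :=
          mul_le_mul_of_nonneg_right (hcs n) (sq_nonneg _)
  have hspos : ∀ n : ℕ, 0 < s (2 * n) := by
    intro n
    have h1 : (0 : ℝ) < (1 / (Pp n).leadingCoeff) ^ 2 := pow_pos (one_div_pos.mpr (hlead n)) 2
    exact lt_of_lt_of_le h1 (hcs n)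
  have hTnn : ∀ n, 0 ≤ ∑' m : ℕ, if n ≤ m then ((Pp m).coeff n) ^ 2 else 0 := fun n =>
    tsum_nonneg fun m => by by_cases h : n ≤ m <;> simp [h, sq_nonneg]
  have hb2le : ∀ n, (Pp n).leadingCoeff ^ 2
      ≤ ∑' m : ℕ, if n ≤ m then ((Pp m).coeff n) ^ 2 else 0 := by
    intro n
    have h := Summable.le_tsum (hcfin n) n
      (fun j _ => by by_cases h : n ≤ j <;> simp [h, sq_nonneg])
    simpa [hcoeff n] using h
  have hcnn : ∀ n, 0 ≤ c n := fun n => by rw [hc n]; exact Real.sqrt_nonneg _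
  have hbc : ∀ n, (Pp n).leadingCoeff ≤ c n := by
    intro n
    calc (Pp n).leadingCoeff = Real.sqrt ((Pp n).leadingCoeff ^ 2) :=
          (Real.sqrt_sq (hlead n).le).symm
      _ ≤ Real.sqrt (∑' m : ℕ, if n ≤ m then ((Pp m).coeff n) ^ 2 else 0) :=
          Real.sqrt_le_sqrt (hb2le n)
      _ = c n := (hc n).symm
  have hb2c2 : ∀ n, (Pp n).leadingCoeff ^ 2 ≤ c n ^ 2 := by
    intro n
    rw [hc n, Real.sq_sqrt (hTnn n)]
    exact hb2le n
  have hlb : ∀ n, 1 / Real.sqrt (s (2 * n)) ≤ (Pp n).leadingCoeff := by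
    intro n
    rw [div_le_iff₀ (Real.sqrt_pos.mpr (hspos n))]
    nlinarith [Real.sq_sqrt (hspos n).le, Real.sqrt_nonneg (s (2 * n)), hlead n, hone n,
      mul_nonneg (hlead n).le (Real.sqrt_nonneg (s (2 * n)))]
  refine ⟨fun n => ⟨hone n, ?_⟩, ?_⟩
  · calc s (2 * n) * (Pp n).leadingCoeff ^ 2 = (Pp n).leadingCoeff ^ 2 * s (2 * n) :=
        mul_comm _ _
      _ ≤ c n ^ 2 * s (2 * n) := mul_le_mul_of_nonneg_right (hb2c2 n) (hspos n).le
  intro r hr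
  have hle1 : ∀ n : ℕ, r ^ n / Real.sqrt (s (2 * n)) ≤ (Pp n).leadingCoeff * r ^ n := by
    intro n
    rw [div_eq_mul_one_div, mul_comm ((Pp n).leadingCoeff)]
    exact mul_le_mul_of_nonneg_left (hlb n) (pow_nonneg hr n)
  have hle2 : ∀ n : ℕ, (Pp n).leadingCoeff * r ^ n ≤ c n * r ^ n := fun n =>
    mul_le_mul_of_nonneg_right (hbc n) (pow_nonneg hr n)
  refine ⟨⟨ENNReal.tsum_le_tsum fun n => ENNReal.ofReal_le_ofReal (hle1 n),
      ENNReal.tsum_le_tsum fun n => ENNReal.ofReal_le_ofReal (hle2 n)⟩, ?_⟩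
  intro hsum
  have hnn1 : ∀ n : ℕ, 0 ≤ r ^ n / Real.sqrt (s (2 * n)) := fun n =>
    div_nonneg (pow_nonneg hr n) (Real.sqrt_nonneg _)
  have hnnb : ∀ n : ℕ, 0 ≤ (Pp n).leadingCoeff * r ^ n := fun n =>
    mul_nonneg (hlead n).le (pow_nonneg hr n)
  have hsumb : Summable (fun n => (Pp n).leadingCoeff * r ^ n) :=
    Summable.of_nonneg_of_le hnnb hle2 hsum
  have hsuml : Summable (fun n => r ^ n / Real.sqrt (s (2 * n))) :=
    Summable.of_nonneg_of_le hnn1 hle1 hsumb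
  exact ⟨Summable.tsum_le_tsum hle1 hsuml hsumb, Summable.tsum_le_tsum hle2 hsumb hsum⟩
end
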